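/- arXiv:1703.04230 — 2 statements merged into one kernel-verified Lean document; each statement's English description precedes it below -/
import Mathlib

section
/- Let H be a finite simple graph with vertex set V and let k be a positive integer. Suppose T ⊆ V is a k-dominating set of H and H is k-T-connected. Then H is k-connected. -/
open SimpleGraph

/-- `HasIDPaths G u v k` : the graph `G` contains `k` pairwise internally disjoint
`u`-`v` paths, i.e. `k` distinct paths sharing no vertices other than `u` and `v`. -/
def HasIDPaths {V : Type*} (G : SimpleGraph V) (u v : V) (k : ℕ) : Prop :=
  ∃ P : Fin k → G.Path u v, Function.Injective P ∧
    ∀ i j, i ≠ j → ∀ w, w ∈ (P i).val.support → w ∈ (P j).val.support → w = u ∨ w = v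

/-- `KConnected G k` : `G` has `k` internally disjoint paths between every pair of nodes. -/
def KConnected {V : Type*} (G : SimpleGraph V) (k : ℕ) : Prop :=
  ∀ u v : V, u ≠ v → HasIDPaths G u v k
set_option linter.unusedSectionVars false
set_option linter.unusedVariables false
set_option maxHeartbeats 1000000
namespace MengerAux


variable {V : Type*} [DecidableEq V]

/-- Split a list at the first element satisfying membership in `S`. -/
theorem first_split {l : List V} {S : Finset V} (h : ∃ v ∈ l, v ∈ S) :
    ∃ p w q, l = p ++ w :: q ∧ w ∈ S ∧ ∀ z ∈ p, z ∉ S := by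
  induction l with
  | nil => simp at h
  | cons a t ih =>
    by_cases ha : a ∈ S
    · exact ⟨[], a, t, rfl, ha, by simp⟩
    · obtain ⟨v, hv, hvS⟩ := h
      rcases List.mem_cons.1 hv with rfl | hvt
      · exact absurd hvS ha
      · obtain ⟨p, w, q, rfl, hw, hp⟩ := ih ⟨v, hvt, hvS⟩
        exact ⟨a :: p, w, q, rfl, hw, by
          intro z hz; rcases List.mem_cons.1 hz with rfl | hz'
          · exact ha
          · exact hp z hz'⟩

/-- Split a list at the last element satisfying membership in `S`. -/
theorem last_split {l : List V} {S : Finset V} (h : ∃ v ∈ l, v ∈ S) :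
    ∃ p w q, l = p ++ w :: q ∧ w ∈ S ∧ ∀ z ∈ q, z ∉ S := by
  induction l with
  | nil => simp at h
  | cons a t ih =>
    by_cases ht : ∃ v ∈ t, v ∈ S
    · obtain ⟨p, w, q, heq, hw, hq⟩ := ih ht
      exact ⟨a :: p, w, q, by rw [heq]; rfl, hw, hq⟩
    · push_neg at ht
      obtain ⟨v, hv, hvS⟩ := h
      rcases List.mem_cons.1 hv with rfl | hvt
      · exact ⟨[], v, t, rfl, hvS, ht⟩
      · exact absurd hvS (ht v hvt)

theorem chain'_erase_split {D : Finset (V × V)} {e : V × V} {l : List V}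
    (h : l.IsChain (fun a b => (a, b) ∈ D)) :
    l.IsChain (fun a b => (a, b) ∈ D.erase e) ∨ (e.1 ∈ l.dropLast ∧ e.2 ∈ l.tail) := by
  induction l with
  | nil => exact Or.inl (by simp)
  | cons a t ih =>
    cases t with
    | nil => exact Or.inl (by simp)
    | cons b t' =>
      rw [List.isChain_cons_cons] at h
      by_cases hab : (a, b) = e
      · right
        constructor
        · rw [← hab]; simp [List.dropLast_cons₂]
        · rw [← hab]; simp
      · rcases ih h.2 with h' | ⟨h1, h2⟩
        · exact Or.inl (List.isChain_cons_cons.2 ⟨Finset.mem_erase.2 ⟨hab, h.1⟩, h'⟩)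
        · right
          constructor
          · simp only [List.dropLast_cons₂]
            exact List.mem_cons_of_mem a h1
          · exact List.mem_cons_of_mem b (by simpa using h2)

/-- Propagate a property along a chain. -/
theorem chain'_prop {R : V → V → Prop} {P : V → Prop} {l : List V}
    (hch : l.IsChain R) (hhd : ∀ x ∈ l.head?, P x) (harc : ∀ a b, R a b → P b) :
    ∀ z ∈ l, P z := by
  induction l with
  | nil => simp
  | cons a t ih =>
    intro z hz
    rcases List.mem_cons.1 hz with rfl | hz'
    · exact hhd z (by simp)
    · cases t with
      | nil => simp at hz'
      | cons b t' =>
        rw [List.isChain_cons_cons] at hch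
        exact ih hch.2 (fun x hx => by simp at hx; subst hx; exact harc a b hch.1) z hz'

/-- Strengthen a chain relation using a pointwise property of the members. -/
theorem chain'_mono_mem {R R' : V → V → Prop} {l : List V}
    (hch : l.IsChain R) (hmem : ∀ a ∈ l, ∀ b ∈ l, R a b → R' a b) : l.IsChain R' := by
  induction l with
  | nil => simp
  | cons a t ih =>
    cases t with
    | nil => simp
    | cons b t' =>
      rw [List.isChain_cons_cons] at hch ⊢
      refine ⟨hmem a (by simp) b (by simp) hch.1, ih hch.2 ?_⟩
      intro x hx y hy hr
      exact hmem x (List.mem_cons_of_mem a hx) y (List.mem_cons_of_mem a hy) hr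



variable {V : Type*} [DecidableEq V]

/-- A walk in the digraph with arc set `D`, from `A` to `B`, as a list of vertices. -/
def DW (D : Finset (V × V)) (A B : Finset V) (l : List V) : Prop :=
  l.IsChain (fun a b => (a, b) ∈ D) ∧ (∃ a ∈ A, l.head? = some a) ∧
    (∃ b ∈ B, l.getLast? = some b)

theorem DW.ne_nil {D : Finset (V × V)} {A B : Finset V} {l : List V} (h : DW D A B l) :
    l ≠ [] := by
  obtain ⟨-, ⟨a, -, ha⟩, -⟩ := h
  intro h'; subst h'; simp at ha

theorem DW.mono {D D' : Finset (V × V)} {A B : Finset V} {l : List V}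
    (h : DW D A B l) (hDD : D ⊆ D') : DW D' A B l :=
  ⟨h.1.imp (fun a b hab => hDD hab), h.2.1, h.2.2⟩

/-- `S` separates `A` from `B` in the digraph `D`: every `A`–`B` walk meets `S`. -/
def Sep (D : Finset (V × V)) (A B : Finset V) (S : Finset V) : Prop :=
  ∀ l, DW D A B l → ∃ s ∈ S, s ∈ l

/-- A system of `k` pairwise disjoint `A`–`B` paths. -/
def Sys (D : Finset (V × V)) (A B : Finset V) (k : ℕ) : Prop :=
  ∃ P : Fin k → List V, (∀ i, DW D A B (P i) ∧ (P i).Nodup) ∧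
    ∀ i j, i ≠ j → ∀ w ∈ P i, w ∉ P j

theorem dmenger_empty {A B : Finset V} {k : ℕ}
    (hsep : ∀ S : Finset V, Sep (∅ : Finset (V × V)) A B S → k ≤ S.card) :
    Sys (∅ : Finset (V × V)) A B k := by
  have hAB : Sep (∅ : Finset (V × V)) A B (A ∩ B) := by
    intro l hl
    obtain ⟨hch, ⟨a, haA, ha⟩, ⟨b, hbB, hb⟩⟩ := hl
    cases l with
    | nil => simp at ha
    | cons x t =>
      cases t with
      | nil =>
        simp at ha hb
        subst ha
        refine ⟨x, Finset.mem_inter.2 ⟨haA, ?_⟩, by simp⟩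
        rw [hb]; exact hbB
      | cons y t' =>
        rw [List.isChain_cons_cons] at hch
        simp at hch
  have hcard := hsep _ hAB
  obtain ⟨t, htsub, htcard⟩ := Finset.exists_subset_card_eq hcard
  have e : Fin k ≃ {x // x ∈ t} := (finCongr htcard.symm).trans (Finset.equivFin t).symm
  refine ⟨fun i => [((e i) : V)], fun i => ?_, fun i j hij w hwi hwj => ?_⟩
  · have hm : ((e i) : V) ∈ A ∩ B := htsub (e i).2
    exact ⟨⟨by simp, ⟨_, (Finset.mem_inter.1 hm).1, rfl⟩,
      ⟨_, (Finset.mem_inter.1 hm).2, rfl⟩⟩, by simp⟩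
  · simp only [List.mem_singleton] at hwi hwj
    rw [hwi] at hwj
    exact hij (e.injective (Subtype.ext hwj))


theorem head?_append_left {l l' : List V} {a : V} (h : l.head? = some a) :
    (l ++ l').head? = some a := by rw [List.head?_append, h, Option.some_or]

theorem getLast?_append_right {l l' : List V} {b : V} (h : l'.getLast? = some b) :
    (l ++ l').getLast? = some b := by rw [List.getLast?_append, h, Option.some_or]

theorem getLast?_of_ne_nil {l : List V} (h : l ≠ []) : ∃ b, l.getLast? = some b :=
  ⟨l.getLast h, List.getLast?_eq_getLast h⟩

/-- Trim a walk to its first vertex inside `C`. -/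
theorem prefix_dw {D : Finset (V × V)} {A B C : Finset V} {l : List V}
    (hdw : DW D A B l) (hmem : ∃ v ∈ l, v ∈ C) :
    ∃ m q, l = m ++ q ∧ DW D A C m ∧ (∀ z ∈ m.dropLast, z ∉ C) := by
  obtain ⟨p, w, q, heq, hw, hp⟩ := first_split hmem
  have heq' : l = (p ++ [w]) ++ q := by rw [heq]; simp
  refine ⟨p ++ [w], q, heq', ⟨?_, ?_, ⟨w, hw, List.getLast?_concat⟩⟩,
    by rw [List.dropLast_concat]; exact hp⟩
  · have h := hdw.1; rw [heq'] at h
    exact (List.isChain_append.1 h).1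
  · obtain ⟨a, ha, ha'⟩ := hdw.2.1
    refine ⟨a, ha, ?_⟩
    rw [heq'] at ha'
    rw [List.head?_append] at ha'
    cases hpp : (p ++ [w]).head? with
    | none => exact absurd (List.head?_eq_none_iff.1 hpp) (by simp)
    | some c => rw [hpp, Option.some_or] at ha'; exact ha'

/-- Trim a walk to its last vertex inside `C`. -/
theorem suffix_dw {D : Finset (V × V)} {A B C : Finset V} {l : List V}
    (hdw : DW D A B l) (hmem : ∃ v ∈ l, v ∈ C) :
    ∃ q m, l = q ++ m ∧ DW D C B m ∧ (∀ z ∈ m.tail, z ∉ C) := by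
  obtain ⟨p, w, q, heq, hw, hq⟩ := last_split hmem
  refine ⟨p, w :: q, heq, ⟨?_, ⟨w, hw, rfl⟩, ?_⟩, by simpa using hq⟩
  · have h := hdw.1; rw [heq] at h
    exact (List.isChain_append.1 h).2.1
  · obtain ⟨b, hb, hb'⟩ := hdw.2.2
    refine ⟨b, hb, ?_⟩
    rw [heq, List.getLast?_append] at hb'
    obtain ⟨b', hb''⟩ := getLast?_of_ne_nil (l := w :: q) (by simp)
    rw [hb'', Option.some_or] at hb'
    rw [hb'', ← hb']

theorem dmenger : ∀ (n : ℕ) (D : Finset (V × V)), D.card ≤ n →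
    (∀ p ∈ D, (p : V × V).1 ≠ p.2) → ∀ (A B : Finset V) (k : ℕ),
    (∀ S : Finset V, Sep D A B S → k ≤ S.card) → Sys D A B k := by
  intro n
  induction n with
  | zero =>
    intro D hD hirr A B k hsep
    have hDe : D = ∅ := Finset.card_eq_zero.1 (Nat.le_antisymm hD (Nat.zero_le _))
    subst hDe; exact dmenger_empty hsep
  | succ n ih =>
    intro D hD hirr A B k hsep
    by_cases hDe : D = ∅
    · subst hDe; exact dmenger_empty hsep
    obtain ⟨e, he⟩ := Finset.nonempty_iff_ne_empty.2 hDe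
    obtain ⟨x, y⟩ := e
    have hxy : x ≠ y := hirr (x, y) he
    set D' := D.erase (x, y) with hD'def
    have hsub : D' ⊆ D := Finset.erase_subset _ _
    have hcard' : D'.card ≤ n := by
      have h1 : D'.card = D.card - 1 := Finset.card_erase_of_mem he
      have h2 : 0 < D.card := Finset.card_pos.2 ⟨_, he⟩
      omega
    have hirr' : ∀ p ∈ D', (p : V × V).1 ≠ p.2 := fun p hp => hirr p (hsub hp)
    by_cases hbig : ∀ S : Finset V, Sep D' A B S → k ≤ S.card
    · obtain ⟨P, h1, h2⟩ := ih D' hcard' hirr' A B k hbig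
      exact ⟨P, fun i => ⟨(h1 i).1.mono hsub, (h1 i).2⟩, h2⟩
    push_neg at hbig
    obtain ⟨S, hSsep, hSlt⟩ := hbig
    have sepx : Sep D A B (insert x S) := by
      intro l hl
      rcases chain'_erase_split (e := (x, y)) hl.1 with h' | ⟨h1, h2⟩
      · obtain ⟨s, hs, hsl⟩ := hSsep l ⟨h', hl.2.1, hl.2.2⟩
        exact ⟨s, Finset.mem_insert_of_mem hs, hsl⟩
      · exact ⟨x, Finset.mem_insert_self _ _, List.mem_of_mem_dropLast h1⟩
    have sepy : Sep D A B (insert y S) := by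
      intro l hl
      rcases chain'_erase_split (e := (x, y)) hl.1 with h' | ⟨h1, h2⟩
      · obtain ⟨s, hs, hsl⟩ := hSsep l ⟨h', hl.2.1, hl.2.2⟩
        exact ⟨s, Finset.mem_insert_of_mem hs, hsl⟩
      · exact ⟨y, Finset.mem_insert_self _ _, List.mem_of_mem_tail h2⟩
    have hxS : x ∉ S := by
      intro h
      rw [Finset.insert_eq_self.2 h] at sepx
      exact absurd (hsep _ sepx) (not_le.2 hSlt)
    have hyS : y ∉ S := by
      intro h
      rw [Finset.insert_eq_self.2 h] at sepy
      exact absurd (hsep _ sepy) (not_le.2 hSlt)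
    have hScard : S.card + 1 = k := by
      have h1 := hsep _ sepx
      rw [Finset.card_insert_of_notMem hxS] at h1
      omega
    -- Claim 1 : A–(S∪{x}) separators of D' are large
    have claim1 : ∀ Z : Finset V, Sep D' A (insert x S) Z → k ≤ Z.card := by
      intro Z hZ
      apply hsep
      intro l hl
      have hmem : ∃ v ∈ l, v ∈ insert x S := by
        obtain ⟨s, h1, h2⟩ := sepx l hl
        exact ⟨s, h2, h1⟩
      obtain ⟨m, q, heq, hdwm, hdrop⟩ := prefix_dw hl hmem
      have hmD' : DW D' A (insert x S) m := by
        refine ⟨?_, hdwm.2.1, hdwm.2.2⟩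
        rcases chain'_erase_split (e := (x, y)) hdwm.1 with h' | ⟨h1, h2⟩
        · exact h'
        · exact absurd (Finset.mem_insert_self x S) (hdrop x h1)
      obtain ⟨s, hsZ, hsm⟩ := hZ m hmD'
      exact ⟨s, hsZ, by rw [heq]; exact List.mem_append_left _ hsm⟩
    -- Claim 2 : (S∪{y})–B separators of D' are large
    have claim2 : ∀ Z : Finset V, Sep D' (insert y S) B Z → k ≤ Z.card := by
      intro Z hZ
      apply hsep
      intro l hl
      have hmem : ∃ v ∈ l, v ∈ insert y S := by
        obtain ⟨s, h1, h2⟩ := sepy l hl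
        exact ⟨s, h2, h1⟩
      obtain ⟨q, m, heq, hdwm, htl⟩ := suffix_dw hl hmem
      have hmD' : DW D' (insert y S) B m := by
        refine ⟨?_, hdwm.2.1, hdwm.2.2⟩
        rcases chain'_erase_split (e := (x, y)) hdwm.1 with h' | ⟨h1, h2⟩
        · exact h'
        · exact absurd (Finset.mem_insert_self y S) (htl y h2)
      obtain ⟨s, hsZ, hsm⟩ := hZ m hmD'
      exact ⟨s, hsZ, by rw [heq]; exact List.mem_append_right _ hsm⟩
    obtain ⟨PA, hPA, hPAdisj⟩ := ih D' hcard' hirr' A (insert x S) k claim1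
    obtain ⟨PB, hPB, hPBdisj⟩ := ih D' hcard' hirr' (insert y S) B k claim2
    -- trim the A-side paths to their first vertex in insert x S
    have trimA : ∀ i : Fin k, ∃ m : List V, DW D' A (insert x S) m ∧ m.Nodup ∧
        (∀ z ∈ m.dropLast, z ∉ insert x S) ∧ (∀ z ∈ m, z ∈ PA i) := by
      intro i
      obtain ⟨hdw, hnd⟩ := hPA i
      have hmem : ∃ v ∈ PA i, v ∈ insert x S := by
        obtain ⟨b, hb, hb'⟩ := hdw.2.2
        exact ⟨b, by
          have := List.getLast?_eq_getLast hdw.ne_nil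
          rw [hb'] at this
          rw [Option.some_inj.1 this]
          exact List.getLast_mem _, hb⟩
      obtain ⟨m, q, heq, hdwm, hdrop⟩ := prefix_dw hdw hmem
      refine ⟨m, ⟨?_, hdwm.2.1, hdwm.2.2⟩, ?_, hdrop, ?_⟩
      · have h := (hPA i).1.1; rw [heq] at h
        exact (List.isChain_append.1 h).1
      · exact List.Nodup.sublist (heq ▸ List.sublist_append_left m q) hnd
      · intro z hz; rw [heq]; exact List.mem_append_left _ hz
    -- trim the B-side paths from their last vertex in insert y S
    have trimB : ∀ j : Fin k, ∃ m : List V, DW D' (insert y S) B m ∧ m.Nodup ∧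
        (∀ z ∈ m.tail, z ∉ insert y S) ∧ (∀ z ∈ m, z ∈ PB j) := by
      intro j
      obtain ⟨hdw, hnd⟩ := hPB j
      have hmem : ∃ v ∈ PB j, v ∈ insert y S := by
        obtain ⟨a, ha, ha'⟩ := hdw.2.1
        exact ⟨a, by
          have := List.head?_eq_head hdw.ne_nil
          rw [ha'] at this
          rw [Option.some_inj.1 this]
          exact List.head_mem _, ha⟩
      obtain ⟨q, m, heq, hdwm, htl⟩ := suffix_dw hdw hmem
      refine ⟨m, ⟨?_, hdwm.2.1, hdwm.2.2⟩, ?_, htl, ?_⟩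
      · have h := (hPB j).1.1; rw [heq] at h
        exact (List.isChain_append.1 h).2.1
      · exact List.Nodup.sublist (heq ▸ (List.sublist_append_right q m)) hnd
      · intro z hz; rw [heq]; exact List.mem_append_right _ hz
    choose pa hpaDW hpaND hpaDrop hpaSub using trimA
    choose pb hpbDW hpbND hpbTl hpbSub using trimB
    choose fa hfaMem hfaLast using fun i => (hpaDW i).2.2
    choose hb hhbMem hhbHead using fun j => (hpbDW j).2.1
    have hpaNe : ∀ i, pa i ≠ [] := fun i => (hpaDW i).ne_nil
    have hpbNe : ∀ j, pb j ≠ [] := fun j => (hpbDW j).ne_nil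
    have hfaIn : ∀ i, fa i ∈ pa i := by
      intro i
      have := List.getLast?_eq_getLast (hpaNe i)
      rw [hfaLast i] at this
      rw [Option.some_inj.1 this]
      exact List.getLast_mem _
    have hhbIn : ∀ j, hb j ∈ pb j := by
      intro j
      have := List.head?_eq_head (hpbNe j)
      rw [hhbHead j] at this
      rw [Option.some_inj.1 this]
      exact List.head_mem _
    -- pb j = hb j :: (pb j).tail
    have hpbEq : ∀ j, pb j = hb j :: (pb j).tail := by
      intro j
      have h1 := List.head?_eq_head (hpbNe j)
      rw [hhbHead j] at h1
      conv_lhs => rw [← List.cons_head_tail (hpbNe j)]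
      rw [← Option.some_inj.1 h1]
    -- membership in target set forces being the distinguished endpoint
    have paS : ∀ i, ∀ z ∈ pa i, z ∈ insert x S → z = fa i := by
      intro i z hz hzS
      have h1 := List.getLast?_eq_getLast (hpaNe i)
      rw [hfaLast i] at h1
      rw [← List.dropLast_append_getLast (hpaNe i)] at hz
      rcases List.mem_append.1 hz with h | h
      · exact absurd hzS (hpaDrop i z h)
      · simp only [List.mem_singleton] at h
        rw [h, ← Option.some_inj.1 h1]
    have pbS : ∀ j, ∀ z ∈ pb j, z ∈ insert y S → z = hb j := by
      intro j z hz hzS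
      rw [hpbEq j] at hz
      rcases List.mem_cons.1 hz with h | h
      · exact h
      · exact absurd hzS (hpbTl j z h)
    have hfaInj : Function.Injective fa := by
      intro i j hij
      by_contra hne
      refine hPAdisj i j hne (fa i) (hpaSub i _ (hfaIn i)) ?_
      rw [hij]
      exact hpaSub j _ (hfaIn j)
    have hhbInj : Function.Injective hb := by
      intro i j hij
      by_contra hne
      refine hPBdisj i j hne (hb i) (hpbSub i _ (hhbIn i)) ?_
      rw [hij]
      exact hpbSub j _ (hhbIn j)
    have hxcard : (insert x S).card = k := by
      rw [Finset.card_insert_of_notMem hxS]; omega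
    have hycard : (insert y S).card = k := by
      rw [Finset.card_insert_of_notMem hyS]; omega
    have hfaSurj : ∀ s ∈ insert x S, ∃ i, fa i = s := by
      intro s hs
      have himg : Finset.image fa Finset.univ = insert x S := by
        apply Finset.eq_of_subset_of_card_le
        · intro z hz
          obtain ⟨i, _, rfl⟩ := Finset.mem_image.1 hz
          exact hfaMem i
        · rw [hxcard, Finset.card_image_of_injective _ hfaInj, Finset.card_univ,
            Fintype.card_fin]
      rw [← himg] at hs
      obtain ⟨i, _, hi⟩ := Finset.mem_image.1 hs
      exact ⟨i, hi⟩
    have hhbSurj : ∀ s ∈ insert y S, ∃ j, hb j = s := by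
      intro s hs
      have himg : Finset.image hb Finset.univ = insert y S := by
        apply Finset.eq_of_subset_of_card_le
        · intro z hz
          obtain ⟨j, _, rfl⟩ := Finset.mem_image.1 hz
          exact hhbMem j
        · rw [hycard, Finset.card_image_of_injective _ hhbInj, Finset.card_univ,
            Fintype.card_fin]
      rw [← himg] at hs
      obtain ⟨j, _, hj⟩ := Finset.mem_image.1 hs
      exact ⟨j, hj⟩
    -- the crossing lemma
    have cross : ∀ i j w, w ∈ pa i → w ∈ pb j → w = fa i ∧ w = hb j ∧ w ∈ S := by
      intro i j w hwa hwb
      obtain ⟨p₁, q₁, heq1⟩ := List.append_of_mem hwa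
      obtain ⟨p₂, q₂, heq2⟩ := List.append_of_mem hwb
      have hsplit1 : pa i = (p₁ ++ [w]) ++ q₁ := by rw [heq1]; simp
      have hchain1 : (p₁ ++ [w]).IsChain (fun a b => (a, b) ∈ D') := by
        have h := (hpaDW i).1
        rw [hsplit1] at h
        exact (List.isChain_append.1 h).1
      have hchain2 : (w :: q₂).IsChain (fun a b => (a, b) ∈ D') := by
        have h := (hpbDW j).1
        rw [heq2] at h
        exact (List.isChain_append.1 h).2.1
      have hc : DW D' A B ((p₁ ++ [w]) ++ q₂) := by
        refine ⟨?_, ?_, ?_⟩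
        · refine List.isChain_append.2 ⟨hchain1, (List.isChain_cons.1 hchain2).2, ?_⟩
          intro a ha b hbq
          rw [List.getLast?_concat] at ha
          simp only [Option.mem_def, Option.some_inj] at ha
          rw [← ha]
          exact (List.isChain_cons.1 hchain2).1 b hbq
        · obtain ⟨a, haA, ha'⟩ := (hpaDW i).2.1
          refine ⟨a, haA, ?_⟩
          rw [hsplit1] at ha'
          rw [List.head?_append] at ha' ⊢
          cases hpp : (p₁ ++ [w]).head? with
          | none => exact absurd (List.head?_eq_none_iff.1 hpp) (by simp)
          | some c =>
            rw [hpp, Option.some_or] at ha'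
            rw [Option.some_or]
            exact ha'
        · obtain ⟨b, hbB, hb'⟩ := (hpbDW j).2.2
          obtain ⟨b', hb''⟩ := getLast?_of_ne_nil (l := w :: q₂) (by simp)
          have h1 : (w :: q₂).getLast? = some b := by
            rw [heq2, List.getLast?_append, hb'', Option.some_or] at hb'
            rw [hb'']; exact hb'
          refine ⟨b, hbB, ?_⟩
          rw [show (p₁ ++ [w]) ++ q₂ = p₁ ++ (w :: q₂) from by simp, List.getLast?_append,
            h1, Option.some_or]
      obtain ⟨s, hsS, hsc⟩ := hSsep _ hc
      rcases List.mem_append.1 hsc with h | hq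
      · rcases List.mem_append.1 h with hp | hw'
        · -- s ∈ p₁ ⊆ dropLast (pa i) : contradiction
          exfalso
          have : s ∈ (pa i).dropLast := by
            rw [heq1, List.dropLast_append_of_ne_nil (by simp : w :: q₁ ≠ [])]
            exact List.mem_append_left _ hp
          exact hpaDrop i s this (Finset.mem_insert_of_mem hsS)
        · -- s = w : the main case
          simp only [List.mem_singleton] at hw'
          subst hw'
          exact ⟨paS i s hwa (Finset.mem_insert_of_mem hsS),
            pbS j s hwb (Finset.mem_insert_of_mem hsS), hsS⟩
      · -- s ∈ q₂ ⊆ tail (pb j) : contradiction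
        exfalso
        have : s ∈ (pb j).tail := by
          rw [heq2]
          cases p₂ with
          | nil => simpa using hq
          | cons c p₂' =>
            rw [List.cons_append, List.tail_cons]
            exact List.mem_append_right _ (List.mem_cons_of_mem _ hq)
        exact hpbTl j s this (Finset.mem_insert_of_mem hsS)
    -- choose the B-side partner for each A-side path
    have hJex : ∀ i : Fin k, ∃ j, hb j = (if fa i = x then y else fa i) := by
      intro i
      apply hhbSurj
      by_cases h : fa i = x
      · rw [if_pos h]; exact Finset.mem_insert_self _ _
      · rw [if_neg h]
        rcases Finset.mem_insert.1 (hfaMem i) with h' | h'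
        · exact absurd h' h
        · exact Finset.mem_insert_of_mem h'
    choose J hJ using hJex
    -- J is injective on distinct indices
    have hJinj : ∀ i i' : Fin k, i ≠ i' → J i ≠ J i' := by
      intro i i' hne heq
      have h1 := hJ i
      have h2 := hJ i'
      rw [heq, h2] at h1
      by_cases hi : fa i = x
      · by_cases hi' : fa i' = x
        · exact hne (hfaInj (hi.trans hi'.symm))
        · rw [if_neg hi', if_pos hi] at h1
          rcases Finset.mem_insert.1 (hfaMem i') with h' | h'
          · exact hi' h'
          · rw [h1] at h'
            exact hyS h'
      · by_cases hi' : fa i' = x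
        · rw [if_pos hi', if_neg hi] at h1
          rcases Finset.mem_insert.1 (hfaMem i) with h' | h'
          · exact hi h'
          · rw [← h1] at h'
            exact hyS h'
        · rw [if_neg hi', if_neg hi] at h1
          exact hne (hfaInj h1).symm
    -- the B-side parts of the glued paths
    have hpartSub : ∀ i : Fin k, ∀ z ∈ (if fa i = x then pb (J i) else (pb (J i)).tail),
        z ∈ pb (J i) := by
      intro i z hz
      by_cases h : fa i = x
      · rwa [if_pos h] at hz
      · rw [if_neg h] at hz
        exact List.mem_of_mem_tail hz
    -- an A-side piece never meets a B-side piece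
    have hcrossQ : ∀ i i' : Fin k, ∀ w, w ∈ pa i →
        w ∈ (if fa i' = x then pb (J i') else (pb (J i')).tail) → False := by
      intro i i' w hw1 hw2
      obtain ⟨h1, h2, h3⟩ := cross i (J i') w hw1 (hpartSub i' w hw2)
      by_cases h : fa i' = x
      · rw [hJ i', if_pos h] at h2
        rw [h2] at h3
        exact hyS h3
      · rw [if_neg h] at hw2
        rw [h2] at hw2
        have hnd := hpbND (J i')
        rw [hpbEq (J i')] at hnd
        exact (List.nodup_cons.1 hnd).1 hw2
    refine ⟨fun i => pa i ++ (if fa i = x then pb (J i) else (pb (J i)).tail),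
      fun i => ⟨⟨?_, ?_, ?_⟩, ?_⟩, ?_⟩
    · -- chain'
      by_cases h : fa i = x
      · simp only [if_pos h]
        refine List.isChain_append.2 ⟨(hpaDW i).1.imp (fun a b hab => hsub hab),
          (hpbDW (J i)).1.imp (fun a b hab => hsub hab), ?_⟩
        intro a ha b hbq
        rw [hfaLast i] at ha
        rw [hhbHead (J i)] at hbq
        simp only [Option.mem_def, Option.some_inj] at ha hbq
        rw [← ha, ← hbq, h]
        have := hJ i
        rw [if_pos h] at this
        rw [this]
        exact he
      · simp only [if_neg h]
        have hch2 : ((hb (J i)) :: (pb (J i)).tail).IsChain (fun a b => (a, b) ∈ D') := by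
          rw [← hpbEq (J i)]
          exact (hpbDW (J i)).1
        refine List.isChain_append.2 ⟨(hpaDW i).1.imp (fun a b hab => hsub hab),
          ((List.isChain_cons.1 hch2).2).imp (fun a b hab => hsub hab), ?_⟩
        intro a ha b hbq
        rw [hfaLast i] at ha
        simp only [Option.mem_def, Option.some_inj] at ha
        have hlink := (List.isChain_cons.1 hch2).1 b hbq
        have hhb' := hJ i
        rw [if_neg h] at hhb'
        rw [← ha, ← hhb']
        exact hsub hlink
    · -- head
      obtain ⟨a, haA, ha'⟩ := (hpaDW i).2.1
      exact ⟨a, haA, head?_append_left ha'⟩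
    · -- last
      by_cases h : fa i = x
      · simp only [if_pos h]
        obtain ⟨b, hbB, hb'⟩ := (hpbDW (J i)).2.2
        exact ⟨b, hbB, getLast?_append_right hb'⟩
      · simp only [if_neg h]
        obtain ⟨b, hbB, hb'⟩ := (hpbDW (J i)).2.2
        cases htl : (pb (J i)).tail with
        | nil =>
          refine ⟨b, hbB, ?_⟩
          rw [List.append_nil]
          have hsingle : pb (J i) = [hb (J i)] := by rw [hpbEq (J i), htl]
          rw [hsingle] at hb'
          have hb2 : hb (J i) = b := by simpa using hb'
          have hhb' := hJ i
          rw [if_neg h] at hhb'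
          rw [hfaLast i, ← hhb', hb2]
        | cons c t =>
          refine ⟨b, hbB, getLast?_append_right ?_⟩
          rw [hpbEq (J i), htl, List.getLast?_cons_cons] at hb'
          exact hb'
    · -- nodup
      refine List.Nodup.append (hpaND i) ?_ ?_
      · by_cases h : fa i = x
        · rw [if_pos h]; exact hpbND (J i)
        · rw [if_neg h]
          exact List.Nodup.sublist (List.tail_sublist _) (hpbND (J i))
      · intro w hw1 hw2
        exact hcrossQ i i w hw1 hw2
    · -- pairwise disjointness
      intro i i' hne w hwi hwi'
      rcases List.mem_append.1 hwi with h1 | h1 <;> rcases List.mem_append.1 hwi' with h2 | h2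
      · exact hPAdisj i i' hne w (hpaSub i w h1) (hpaSub i' w h2)
      · exact hcrossQ i i' w h1 h2
      · exact hcrossQ i' i w h2 h1
      · exact hPBdisj (J i) (J i') (hJinj i i' hne) w (hpbSub _ w (hpartSub i w h1))
          (hpbSub _ w (hpartSub i' w h2))
/-! ### From lists to graph walks -/

open SimpleGraph

/-- Build a walk from a chain of adjacent vertices. -/
def mkWalk (G : SimpleGraph V) : ∀ (a b : V) (l : List V), List.Chain G.Adj a (l ++ [b]) → G.Walk a b
  | a, b, [], h => SimpleGraph.Walk.cons ((List.chain_cons.1 h).1) SimpleGraph.Walk.nil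
  | a, b, c :: l, h =>
    SimpleGraph.Walk.cons ((List.chain_cons.1 h).1) (mkWalk G c b l (List.chain_cons.1 h).2)

theorem mkWalk_support (G : SimpleGraph V) :
    ∀ (a b : V) (l : List V) (h : List.Chain G.Adj a (l ++ [b])),
      (mkWalk G a b l h).support = a :: (l ++ [b])
  | a, b, [], h => by simp [mkWalk]
  | a, b, c :: l, h => by
    simp only [mkWalk, SimpleGraph.Walk.support_cons]
    exact congrArg (List.cons a) ((mkWalk_support G c b l _).trans (by simp))

theorem support_last? {G : SimpleGraph V} : ∀ {a b : V} (p : G.Walk a b),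
    p.support.getLast? = some b := by
  intro a b p
  induction p with
  | nil => simp
  | @cons a c b h q ih =>
    rw [SimpleGraph.Walk.support_cons, q.support_eq_cons, List.getLast?_cons_cons,
      ← q.support_eq_cons]
    exact ih

theorem walk_support_decomp {G : SimpleGraph V} {u v : V} (p : G.Walk u v) (hne : u ≠ v) :
    ∃ mid, p.support = u :: (mid ++ [v]) := by
  cases p with
  | nil => exact absurd rfl hne
  | @cons _ c _ h q =>
    refine ⟨q.support.dropLast, ?_⟩
    rw [SimpleGraph.Walk.support_cons]
    congr 1
    conv_lhs => rw [← List.dropLast_append_getLast (q.support_ne_nil)]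
    congr 1
    have h1 := List.getLast?_eq_getLast q.support_ne_nil
    rw [support_last? q] at h1
    rw [← Option.some_inj.1 h1]

theorem chain_build {R : V → V → Prop} : ∀ (l : List V) (u v : V), l ≠ [] →
    (∀ c ∈ l.head?, R u c) → l.IsChain R → (∀ c ∈ l.getLast?, R c v) →
    List.Chain R u (l ++ [v])
  | [], u, v, h, _, _, _ => absurd rfl h
  | [c], u, v, _, hhd, _, hlast => by
    refine List.chain_cons.2 ⟨hhd c rfl, List.chain_cons.2 ⟨hlast c rfl, List.Chain.nil⟩⟩
  | c :: c' :: t, u, v, _, hhd, hch, hlast => by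
    refine List.chain_cons.2 ⟨hhd c rfl, ?_⟩
    exact chain_build (c' :: t) c v (by simp) (fun d hd => by
        simp only [List.head?_cons, Option.mem_def, Option.some_inj] at hd
        rw [← hd]
        exact (List.isChain_cons_cons.1 hch).1)
      (List.isChain_cons_cons.1 hch).2
      (fun d hd => hlast d (by rw [List.getLast?_cons_cons]; exact hd))

/-- Assemble internally disjoint path systems from middle-vertex lists. -/
theorem hasIDPaths_of_lists (G : SimpleGraph V) (u v : V) (hne : u ≠ v) (k : ℕ)
    (m : Fin k → List V)
    (hnd : ∀ i, (m i).Nodup) (hu : ∀ i, u ∉ m i) (hv : ∀ i, v ∉ m i)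
    (hch : ∀ i, List.Chain G.Adj u (m i ++ [v]))
    (hdisj : ∀ i j, i ≠ j → ∀ w ∈ m i, w ∉ m j)
    (hdistinct : ∀ i j, i ≠ j → m i ≠ m j) : HasIDPaths G u v k := by
  have hpath : ∀ i, (mkWalk G u v (m i) (hch i)).IsPath := by
    intro i
    rw [SimpleGraph.Walk.isPath_def, mkWalk_support]
    rw [List.nodup_cons]
    constructor
    · intro hmem
      rcases List.mem_append.1 hmem with h | h
      · exact hu i h
      · simp only [List.mem_singleton] at h
        exact hne h
    · refine List.Nodup.append (hnd i) (List.nodup_singleton v) ?_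
      intro a ha ha'
      simp only [List.mem_singleton] at ha'
      rw [ha'] at ha
      exact hv i ha
  refine ⟨fun i => ⟨mkWalk G u v (m i) (hch i), hpath i⟩, ?_, ?_⟩
  · intro i j hij
    by_contra hne'
    have hval : (mkWalk G u v (m i) (hch i)) = (mkWalk G u v (m j) (hch j)) :=
      congrArg Subtype.val hij
    have hsup := congrArg SimpleGraph.Walk.support hval
    rw [mkWalk_support, mkWalk_support] at hsup
    have : m i ++ [v] = m j ++ [v] := by
      injection hsup
    have hmm : m i = m j := by
      have := List.append_inj_left' this (by simp)
      exact this
    exact hdistinct i j hne' hmm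
  · intro i j hij w hwi hwj
    simp only [mkWalk_support] at hwi hwj
    rcases List.mem_cons.1 hwi with h | h
    · exact Or.inl h
    rcases List.mem_append.1 h with h | h
    · rcases List.mem_cons.1 hwj with h' | h'
      · exact Or.inl h'
      rcases List.mem_append.1 h' with h' | h'
      · exact absurd h' (hdisj i j hij w h)
      · simp only [List.mem_singleton] at h'
        exact Or.inr h'
    · simp only [List.mem_singleton] at h
      exact Or.inr h

theorem part2core {V : Type*} [Fintype V] [DecidableEq V] (G : SimpleGraph V)
    (u v : V) (hne : u ≠ v) (hnadj : ¬ G.Adj u v) (k : ℕ)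
    (hcut : ∀ S : Finset V, u ∉ S → v ∉ S → S.card < k →
      ∃ w : G.Walk u v, ∀ x ∈ w.support, x ∉ S) :
    ∃ m : Fin k → List V, (∀ i, (m i).Nodup ∧ (m i) ≠ [] ∧ u ∉ m i ∧ v ∉ m i ∧
      List.Chain G.Adj u (m i ++ [v])) ∧ (∀ i j, i ≠ j → ∀ w ∈ m i, w ∉ m j) := by
  classical
  set D : Finset (V × V) := Finset.univ.filter
    (fun p => G.Adj p.1 p.2 ∧ p.1 ≠ u ∧ p.1 ≠ v ∧ p.2 ≠ u ∧ p.2 ≠ v) with hD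
  set A : Finset V := Finset.univ.filter (fun a => G.Adj u a) with hA
  set B : Finset V := Finset.univ.filter (fun b => G.Adj b v) with hB
  have hirr : ∀ p ∈ D, (p : V × V).1 ≠ p.2 := by
    intro p hp
    rw [hD, Finset.mem_filter] at hp
    exact G.ne_of_adj hp.2.1
  -- the vertices of a D-walk avoid u and v
  have hDavoid : ∀ (l : List V), l.IsChain (fun a b => (a, b) ∈ D) →
      (∀ c ∈ l.head?, c ∈ A) → ∀ z ∈ l, z ≠ u ∧ z ≠ v := by
    intro l hch hhd
    refine chain'_prop hch ?_ ?_
    · intro c hc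
      have := hhd c hc
      rw [hA, Finset.mem_filter] at this
      exact ⟨fun h => G.irrefl (h ▸ this.2), fun h => hnadj (h ▸ this.2)⟩
    · intro a b hab
      rw [hD, Finset.mem_filter] at hab
      exact ⟨hab.2.2.2.2.1, hab.2.2.2.2.2⟩
  have hsep : ∀ S : Finset V, Sep D A B S → k ≤ S.card := by
    intro S hS
    by_contra hlt
    push_neg at hlt
    set S' : Finset V := (S.erase u).erase v with hS'
    have hS'u : u ∉ S' := fun h => (Finset.mem_erase.1 (Finset.mem_of_mem_erase h)).1 rfl
    have hS'v : v ∉ S' := fun h => (Finset.mem_erase.1 h).1 rfl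
    have hS'card : S'.card < k := by
      have h1 := Finset.card_erase_le (s := S.erase u) (a := v)
      have h2 := Finset.card_erase_le (s := S) (a := u)
      rw [hS']
      omega
    obtain ⟨w, hw⟩ := hcut S' hS'u hS'v hS'card
    set p : G.Path u v := w.toPath with hp
    have hpsub : ∀ x ∈ (p : G.Walk u v).support, x ∉ S' :=
      fun x hx => hw x (SimpleGraph.Walk.support_toPath_subset w hx)
    obtain ⟨mid, hmid⟩ := walk_support_decomp (p : G.Walk u v) hne
    have hnodup : ((p : G.Walk u v)).support.Nodup := p.2.2
    have hchainAdj : List.IsChain G.Adj (u :: (mid ++ [v])) := by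
      rw [← hmid]; exact SimpleGraph.Walk.isChain_adj_support _
    have humid : u ∉ mid ++ [v] := by
      rw [hmid] at hnodup
      exact (List.nodup_cons.1 hnodup).1
    have hvmid : v ∉ mid := by
      rw [hmid] at hnodup
      have := (List.nodup_cons.1 hnodup).2
      intro hmem
      rcases List.disjoint_of_nodup_append this hmem (by simp)
    have hmidne : mid ≠ [] := by
      intro h
      rw [h] at hchainAdj
      simp only [List.nil_append] at hchainAdj
      exact hnadj (List.isChain_cons_cons.1 hchainAdj).1
    -- mid is a D-walk from A to B
    have hchmid : List.IsChain G.Adj (mid ++ [v]) := (List.isChain_cons.1 hchainAdj).2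
    have hmidchain : mid.IsChain G.Adj := (List.isChain_append.1 hchmid).1
    have hmidmem : ∀ z ∈ mid, z ≠ u ∧ z ≠ v := by
      intro z hz
      constructor
      · intro h; exact humid (List.mem_append_left _ (h ▸ hz))
      · intro h; exact hvmid (h ▸ hz)
    have hmidD : mid.IsChain (fun a b => (a, b) ∈ D) := by
      refine chain'_mono_mem hmidchain ?_
      intro a ha b hb hadj
      rw [hD, Finset.mem_filter]
      exact ⟨Finset.mem_univ _, hadj, (hmidmem a ha).1, (hmidmem a ha).2,
        (hmidmem b hb).1, (hmidmem b hb).2⟩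
    have hheadA : ∃ a ∈ A, mid.head? = some a := by
      refine ⟨mid.head hmidne, ?_, List.head?_eq_head hmidne⟩
      rw [hA, Finset.mem_filter]
      refine ⟨Finset.mem_univ _, ?_⟩
      have := (List.isChain_cons.1 hchainAdj).1 (mid.head hmidne) ?_
      · exact this
      · rw [List.head?_append, List.head?_eq_head hmidne, Option.some_or]
        rfl
    have hlastB : ∃ b ∈ B, mid.getLast? = some b := by
      refine ⟨mid.getLast hmidne, ?_, List.getLast?_eq_getLast hmidne⟩
      rw [hB, Finset.mem_filter]
      refine ⟨Finset.mem_univ _, ?_⟩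
      have := (List.isChain_append.1 hchmid).2.2 (mid.getLast hmidne)
        (by rw [List.getLast?_eq_getLast hmidne]; rfl) v (by rfl)
      exact this
    obtain ⟨s, hsS, hsmid⟩ := hS mid ⟨hmidD, hheadA, hlastB⟩
    have hsS' : s ∈ S' := by
      rw [hS', Finset.mem_erase, Finset.mem_erase]
      exact ⟨(hmidmem s hsmid).2, (hmidmem s hsmid).1, hsS⟩
    exact hpsub s (by rw [hmid]; exact List.mem_cons_of_mem _ (List.mem_append_left _ hsmid)) hsS'
  obtain ⟨P, hP, hPdisj⟩ := dmenger D.card D le_rfl hirr A B k hsep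
  refine ⟨P, fun i => ?_, hPdisj⟩
  obtain ⟨hdw, hnd⟩ := hP i
  have havoid := hDavoid (P i) hdw.1 (by
    intro c hc
    obtain ⟨a, haA, ha'⟩ := hdw.2.1
    rw [ha'] at hc
    simp only [Option.mem_def, Option.some_inj] at hc
    rw [← hc]; exact haA)
  refine ⟨hnd, hdw.ne_nil, fun h => (havoid u h).1 rfl, fun h => (havoid v h).2 rfl, ?_⟩
  refine chain_build (P i) u v hdw.ne_nil ?_ (hdw.1.imp ?_) ?_
  · intro c hc
    obtain ⟨a, haA, ha'⟩ := hdw.2.1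
    rw [ha'] at hc
    simp only [Option.mem_def, Option.some_inj] at hc
    rw [hA, Finset.mem_filter] at haA
    rw [← hc]
    exact haA.2
  · intro a b hab
    rw [hD, Finset.mem_filter] at hab
    exact hab.2.1
  · intro c hc
    obtain ⟨b, hbB, hb'⟩ := hdw.2.2
    rw [hb'] at hc
    simp only [Option.mem_def, Option.some_inj] at hc
    rw [hB, Finset.mem_filter] at hbB
    rw [← hc]
    exact hbB.2

/-- A path between `a` and `b` that uses the edge `ab` is the single-edge path. -/
theorem isPath_edge_canonical {G : SimpleGraph V} {a b : V} (p : G.Walk a b) (hp : p.IsPath)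
    (he : s(a, b) ∈ p.edges) :
    ∃ h : G.Adj a b, p = SimpleGraph.Walk.cons h SimpleGraph.Walk.nil := by
  cases p with
  | nil => simp at he
  | @cons _ w _ h q =>
    rw [SimpleGraph.Walk.edges_cons, List.mem_cons] at he
    rcases he with he | he
    · have hbw : b = w := by
        rcases Sym2.eq_iff.1 he with ⟨-, h2⟩ | ⟨h1, h2⟩
        · exact h2
        · rw [h2, h1]
      subst hbw
      have hq : q = SimpleGraph.Walk.nil :=
        SimpleGraph.Walk.isPath_iff_eq_nil.1 ((SimpleGraph.Walk.cons_isPath_iff h q).1 hp).1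
      subst hq
      exact ⟨h, rfl⟩
    · have ha : a ∈ q.support := SimpleGraph.Walk.fst_mem_support_of_mem_edges q he
      exact absurd ha ((SimpleGraph.Walk.cons_isPath_iff h q).1 hp).2

/-- From a `k`-system of internally disjoint paths with `k` big enough, extract a path
avoiding `S` and avoiding the edge `uv`. -/
theorem exists_good_path {V : Type*} [Fintype V] {G : SimpleGraph V} {t t' u v : V} {k : ℕ}
    (htt' : t ≠ t') (huv : u ≠ v)
    (P : Fin k → G.Path t t') (hinj : Function.Injective P)
    (hdisj : ∀ i j, i ≠ j → ∀ w, w ∈ (P i).val.support → w ∈ (P j).val.support →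
      w = t ∨ w = t')
    (S : Finset V) (hSt : ∀ s ∈ S, s ≠ t ∧ s ≠ t') (hcard : S.card + 1 < k) :
    ∃ i, (∀ s ∈ S, s ∉ (P i).val.support) ∧ s(u, v) ∉ (P i).val.edges := by
  classical
  set Bad1 : Finset (Fin k) := Finset.univ.filter
    (fun i => ∃ s ∈ S, s ∈ (P i).val.support) with hBad1
  set Bad2 : Finset (Fin k) := Finset.univ.filter
    (fun i => s(u, v) ∈ (P i).val.edges) with hBad2
  have hBad1card : Bad1.card ≤ S.card := by
    have hex : ∀ i ∈ Bad1, ∃ s ∈ S, s ∈ (P i).val.support := by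
      intro i hi
      rw [hBad1, Finset.mem_filter] at hi
      exact hi.2
    choose f hfS hfsup using hex
    have : Bad1.card ≤ S.card := by
      refine Finset.card_le_card_of_injOn (fun i => if h : i ∈ Bad1 then f i h else t) ?_ ?_
      · intro i hi
        simp only [dif_pos hi]
        have hi' : i ∈ Bad1 := hi
        simpa [hi'] using hfS i hi'
      · intro i hi j hj hfij
        simp only [Finset.mem_coe] at hi hj
        simp only [dif_pos hi, dif_pos hj] at hfij
        by_contra hne
        have h1 := hfsup i hi
        have h2 := hfsup j hj
        rw [hfij] at h1
        rcases hdisj i j hne _ h1 h2 with h | h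
        · exact (hSt _ (hfS j hj)).1 h
        · exact (hSt _ (hfS j hj)).2 h
    exact this
  have hBad2card : Bad2.card ≤ 1 := by
    rw [Finset.card_le_one]
    intro i hi j hj
    rw [hBad2, Finset.mem_filter] at hi hj
    by_contra hne
    have hu1 := SimpleGraph.Walk.fst_mem_support_of_mem_edges _ hi.2
    have hu2 := SimpleGraph.Walk.fst_mem_support_of_mem_edges _ hj.2
    have hv1 := SimpleGraph.Walk.snd_mem_support_of_mem_edges _ hi.2
    have hv2 := SimpleGraph.Walk.snd_mem_support_of_mem_edges _ hj.2
    have hedge : s(u, v) = s(t, t') := by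
      rcases hdisj i j hne u hu1 hu2 with h | h <;> rcases hdisj i j hne v hv1 hv2 with h' | h'
      · exact absurd (h.trans h'.symm) huv
      · rw [h, h']
      · rw [h, h', Sym2.eq_swap]
      · exact absurd (h.trans h'.symm) huv
    rw [hedge] at hi hj
    obtain ⟨h1, he1⟩ := isPath_edge_canonical (P i).val (P i).2 hi.2
    obtain ⟨h2, he2⟩ := isPath_edge_canonical (P j).val (P j).2 hj.2
    exact hne (hinj (Subtype.ext (he1.trans he2.symm)))
  have hle : (Bad1 ∪ Bad2).card ≤ Bad1.card + Bad2.card := Finset.card_union_le Bad1 Bad2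
  have hex : ∃ i : Fin k, i ∉ Bad1 ∪ Bad2 := by
    by_contra hall
    push_neg at hall
    have hsub : Finset.univ ⊆ Bad1 ∪ Bad2 := fun i _ => hall i
    have h2 := Finset.card_le_card hsub
    rw [Finset.card_univ, Fintype.card_fin] at h2
    omega
  obtain ⟨i, hi⟩ := hex
  rw [Finset.mem_union, not_or] at hi
  refine ⟨i, ?_, ?_⟩
  · intro s hsS hsup
    exact hi.1 (by rw [hBad1, Finset.mem_filter]; exact ⟨Finset.mem_univ _, s, hsS, hsup⟩)
  · intro hedge
    exact hi.2 (by rw [hBad2, Finset.mem_filter]; exact ⟨Finset.mem_univ _, hedge⟩)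

/-- Simpler version: only avoiding `S`. -/
theorem exists_good_path' {V : Type*} [Fintype V] {G : SimpleGraph V} {t t' : V} {k : ℕ}
    (htt' : t ≠ t')
    (P : Fin k → G.Path t t')
    (hdisj : ∀ i j, i ≠ j → ∀ w, w ∈ (P i).val.support → w ∈ (P j).val.support →
      w = t ∨ w = t')
    (S : Finset V) (hSt : ∀ s ∈ S, s ≠ t ∧ s ≠ t') (hcard : S.card < k) :
    ∃ i, ∀ s ∈ S, s ∉ (P i).val.support := by
  classical
  set Bad1 : Finset (Fin k) := Finset.univ.filter
    (fun i => ∃ s ∈ S, s ∈ (P i).val.support) with hBad1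
  have hBad1card : Bad1.card ≤ S.card := by
    have hex : ∀ i ∈ Bad1, ∃ s ∈ S, s ∈ (P i).val.support := by
      intro i hi
      rw [hBad1, Finset.mem_filter] at hi
      exact hi.2
    choose f hfS hfsup using hex
    refine Finset.card_le_card_of_injOn (fun i => if h : i ∈ Bad1 then f i h else t) ?_ ?_
    · intro i hi
      simp only [dif_pos hi]
      have hi' : i ∈ Bad1 := hi
      simpa [hi'] using hfS i hi'
    · intro i hi j hj hfij
      simp only [Finset.mem_coe] at hi hj
      simp only [dif_pos hi, dif_pos hj] at hfij
      by_contra hne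
      have h1 := hfsup i hi
      have h2 := hfsup j hj
      rw [hfij] at h1
      rcases hdisj i j hne _ h1 h2 with h | h
      · exact (hSt _ (hfS j hj)).1 h
      · exact (hSt _ (hfS j hj)).2 h
  have hex : ∃ i : Fin k, i ∉ Bad1 := by
    by_contra hall
    push_neg at hall
    have : Finset.univ ⊆ Bad1 := fun i _ => hall i
    have h2 := Finset.card_le_card this
    rw [Finset.card_univ, Fintype.card_fin] at h2
    omega
  obtain ⟨i, hi⟩ := hex
  refine ⟨i, fun s hsS hsup => ?_⟩
  exact hi (by rw [hBad1, Finset.mem_filter]; exact ⟨Finset.mem_univ _, s, hsS, hsup⟩)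

theorem pick_t {V : Type*} [Fintype V] (H : SimpleGraph V) (k : ℕ) (T : Set V)
    (hdom : ∀ v : V, v ∉ T → k ≤ (T ∩ H.neighborSet v).ncard)
    (u : V) (hu : u ∉ T) (X : Finset V) (hX : X.card < k) :
    ∃ t, t ∈ T ∧ H.Adj u t ∧ t ∉ X := by
  classical
  set F : Finset V := (T ∩ H.neighborSet u).toFinset with hF
  have hFcard : k ≤ F.card := by
    rw [hF, ← Set.ncard_eq_toFinset_card']
    exact hdom u hu
  have hne : (F \ X).Nonempty := by
    rw [← Finset.card_pos]
    have hsd := Finset.le_card_sdiff X F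
    omega
  obtain ⟨t, ht⟩ := hne
  rw [Finset.mem_sdiff, hF, Set.mem_toFinset] at ht
  exact ⟨t, ht.1.1, ht.1.2, ht.2⟩

theorem stepB_nonadj {V : Type*} [Fintype V] (H : SimpleGraph V) (k : ℕ) (T : Set V)
    (hdom : ∀ v : V, v ∉ T → k ≤ (T ∩ H.neighborSet v).ncard)
    (hTconn : ∀ u v : V, u ∈ T → v ∈ T → u ≠ v → HasIDPaths H u v k)
    (u v : V) (hne : u ≠ v) (hnadj : ¬H.Adj u v)
    (S : Finset V) (hu : u ∉ S) (hv : v ∉ S) (hcard : S.card < k) :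
    ∃ w : H.Walk u v, ∀ x ∈ w.support, x ∉ S := by
  classical
  -- pick attachment point for u
  have hT : ∃ t, t ∈ T ∧ t ∉ S ∧ t ≠ v ∧ (t = u ∨ H.Adj u t) := by
    by_cases huT : u ∈ T
    · exact ⟨u, huT, hu, hne, Or.inl rfl⟩
    · obtain ⟨t, htT, htadj, htS⟩ := pick_t H k T hdom u huT S hcard
      refine ⟨t, htT, htS, ?_, Or.inr htadj⟩
      intro h
      exact hnadj (h ▸ htadj)
  have hT' : ∃ t', t' ∈ T ∧ t' ∉ S ∧ t' ≠ u ∧ (t' = v ∨ H.Adj t' v) := by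
    by_cases hvT : v ∈ T
    · exact ⟨v, hvT, hv, hne.symm, Or.inl rfl⟩
    · obtain ⟨t', htT, htadj, htS⟩ := pick_t H k T hdom v hvT S hcard
      refine ⟨t', htT, htS, ?_, Or.inr htadj.symm⟩
      intro h
      exact hnadj (h ▸ htadj).symm
  obtain ⟨t, htT, htS, htv, hut⟩ := hT
  obtain ⟨t', ht'T, ht'S, ht'u, ht'v⟩ := hT'
  -- walks u→t and t'→v with controlled support
  have hW1 : ∃ w : H.Walk u t, ∀ x ∈ w.support, x = u ∨ x = t := by
    rcases hut with heq | hadj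
    · subst heq
      exact ⟨SimpleGraph.Walk.nil, by simp⟩
    · exact ⟨SimpleGraph.Walk.cons hadj SimpleGraph.Walk.nil, by
        intro x hx
        simp only [SimpleGraph.Walk.support_cons, SimpleGraph.Walk.support_nil] at hx
        simpa using hx⟩
  have hW2 : ∃ w : H.Walk t' v, ∀ x ∈ w.support, x = t' ∨ x = v := by
    rcases ht'v with heq | hadj
    · subst heq
      exact ⟨SimpleGraph.Walk.nil, by simp⟩
    · exact ⟨SimpleGraph.Walk.cons hadj SimpleGraph.Walk.nil, by
        intro x hx
        simp only [SimpleGraph.Walk.support_cons, SimpleGraph.Walk.support_nil] at hx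
        simpa using hx⟩
  obtain ⟨w1, hw1⟩ := hW1
  obtain ⟨w2, hw2⟩ := hW2
  by_cases htt' : t = t'
  · subst htt'
    refine ⟨w1.append w2, ?_⟩
    intro x hx
    rw [SimpleGraph.Walk.support_append] at hx
    rcases List.mem_append.1 hx with h | h
    · rcases hw1 x h with rfl | rfl
      · exact hu
      · exact htS
    · rcases hw2 x (List.mem_of_mem_tail h) with rfl | rfl
      · exact htS
      · exact hv
  · obtain ⟨P, hinj, hd⟩ := hTconn t t' htT ht'T htt'
    obtain ⟨i, hgood⟩ := exists_good_path' htt' P hd S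
      (fun s hs => ⟨fun h => htS (h ▸ hs), fun h => ht'S (h ▸ hs)⟩) hcard
    refine ⟨w1.append ((P i).val.append w2), ?_⟩
    intro x hx
    rw [SimpleGraph.Walk.support_append, SimpleGraph.Walk.support_append] at hx
    rcases List.mem_append.1 hx with h | h
    · rcases hw1 x h with rfl | rfl
      · exact hu
      · exact htS
    · rcases List.mem_append.1 (List.mem_of_mem_tail h) with h' | h'
      · intro hxS
        exact hgood x hxS h'
      · rcases hw2 x (List.mem_of_mem_tail h') with rfl | rfl
        · exact ht'S
        · exact hv

theorem stepB_adj {V : Type*} [Fintype V] (H : SimpleGraph V) (k : ℕ) (T : Set V)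
    (hdom : ∀ v : V, v ∉ T → k ≤ (T ∩ H.neighborSet v).ncard)
    (hTconn : ∀ u v : V, u ∈ T → v ∈ T → u ≠ v → HasIDPaths H u v k)
    (u v : V) (hne : u ≠ v) (hadj : H.Adj u v)
    (S : Finset V) (hu : u ∉ S) (hv : v ∉ S) (hcard : S.card + 1 < k) :
    ∃ w : (H.deleteEdges {s(u, v)}).Walk u v, ∀ x ∈ w.support, x ∉ S := by
  classical
  set G' : SimpleGraph V := H.deleteEdges {s(u, v)} with hG'
  have hGadj : ∀ a b : V, H.Adj a b → s(a, b) ≠ s(u, v) → G'.Adj a b := by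
    intro a b h1 h2
    rw [hG', SimpleGraph.deleteEdges_adj]
    exact ⟨h1, by simpa using h2⟩
  have hT : ∃ t, t ∈ T ∧ t ∉ S ∧ t ≠ v ∧ (t = u ∨ H.Adj u t) := by
    by_cases huT : u ∈ T
    · exact ⟨u, huT, hu, hne, Or.inl rfl⟩
    · obtain ⟨t, htT, htadj, htS⟩ := pick_t H k T hdom u huT (insert v S) (by
        have := Finset.card_insert_le v S; omega)
      refine ⟨t, htT, fun h => htS (Finset.mem_insert_of_mem h), fun h =>
        htS (h ▸ Finset.mem_insert_self v S), Or.inr htadj⟩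
  have hT' : ∃ t', t' ∈ T ∧ t' ∉ S ∧ t' ≠ u ∧ (t' = v ∨ H.Adj t' v) := by
    by_cases hvT : v ∈ T
    · exact ⟨v, hvT, hv, hne.symm, Or.inl rfl⟩
    · obtain ⟨t', htT, htadj, htS⟩ := pick_t H k T hdom v hvT (insert u S) (by
        have := Finset.card_insert_le u S; omega)
      refine ⟨t', htT, fun h => htS (Finset.mem_insert_of_mem h), fun h =>
        htS (h ▸ Finset.mem_insert_self u S), Or.inr htadj.symm⟩
  obtain ⟨t, htT, htS, htv, hut⟩ := hT
  obtain ⟨t', ht'T, ht'S, ht'u, ht'v⟩ := hT'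
  -- edge u–t is not the edge u–v since t ≠ v ; edge t'–v is not u–v since t' ≠ u
  have hW1 : ∃ w : G'.Walk u t, ∀ x ∈ w.support, x = u ∨ x = t := by
    rcases hut with heq | hadj'
    · subst heq
      exact ⟨SimpleGraph.Walk.nil, by simp⟩
    · refine ⟨SimpleGraph.Walk.cons (hGadj u t hadj' ?_) SimpleGraph.Walk.nil, by
        intro x hx
        simp only [SimpleGraph.Walk.support_cons, SimpleGraph.Walk.support_nil] at hx
        simpa using hx⟩
      intro h
      rcases Sym2.eq_iff.1 h with ⟨-, h2⟩ | ⟨h1, -⟩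
      · exact htv h2
      · exact hne h1
  have hW2 : ∃ w : G'.Walk t' v, ∀ x ∈ w.support, x = t' ∨ x = v := by
    rcases ht'v with heq | hadj'
    · subst heq
      exact ⟨SimpleGraph.Walk.nil, by simp⟩
    · refine ⟨SimpleGraph.Walk.cons (hGadj t' v hadj' ?_) SimpleGraph.Walk.nil, by
        intro x hx
        simp only [SimpleGraph.Walk.support_cons, SimpleGraph.Walk.support_nil] at hx
        simpa using hx⟩
      intro h
      rcases Sym2.eq_iff.1 h with ⟨h1, -⟩ | ⟨-, h2⟩
      · exact ht'u h1
      · exact hne h2.symm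
  obtain ⟨w1, hw1⟩ := hW1
  obtain ⟨w2, hw2⟩ := hW2
  by_cases htt' : t = t'
  · subst htt'
    refine ⟨w1.append w2, ?_⟩
    intro x hx
    rw [SimpleGraph.Walk.support_append] at hx
    rcases List.mem_append.1 hx with h | h
    · rcases hw1 x h with rfl | rfl
      · exact hu
      · exact htS
    · rcases hw2 x (List.mem_of_mem_tail h) with rfl | rfl
      · exact htS
      · exact hv
  · obtain ⟨P, hinj, hd⟩ := hTconn t t' htT ht'T htt'
    obtain ⟨i, hgood, hedge⟩ := exists_good_path htt' hne P hinj hd S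
      (fun s hs => ⟨fun h => htS (h ▸ hs), fun h => ht'S (h ▸ hs)⟩) hcard
    have htrans : ∀ e ∈ (P i).val.edges, e ∈ G'.edgeSet := by
      intro e he
      rw [hG', SimpleGraph.edgeSet_deleteEdges]
      refine ⟨(P i).val.edges_subset_edgeSet he, ?_⟩
      intro hmem
      simp only [Set.mem_singleton_iff] at hmem
      exact hedge (hmem ▸ he)
    set pmid : G'.Walk t t' := (P i).val.transfer G' htrans with hpmid
    refine ⟨w1.append (pmid.append w2), ?_⟩
    intro x hx
    rw [SimpleGraph.Walk.support_append, SimpleGraph.Walk.support_append] at hx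
    rcases List.mem_append.1 hx with h | h
    · rcases hw1 x h with rfl | rfl
      · exact hu
      · exact htS
    · rcases List.mem_append.1 (List.mem_of_mem_tail h) with h' | h'
      · intro hxS
        rw [hpmid, SimpleGraph.Walk.support_transfer] at h'
        exact hgood x hxS h'
      · rcases hw2 x (List.mem_of_mem_tail h') with rfl | rfl
        · exact ht'S
        · exact hv

theorem case_nonadj {V : Type*} [Fintype V] (H : SimpleGraph V) (k : ℕ) (T : Set V)
    (hdom : ∀ v : V, v ∉ T → k ≤ (T ∩ H.neighborSet v).ncard)
    (hTconn : ∀ u v : V, u ∈ T → v ∈ T → u ≠ v → HasIDPaths H u v k)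
    (u v : V) (hne : u ≠ v) (hnadj : ¬H.Adj u v) : HasIDPaths H u v k := by
  classical
  have hcut : ∀ S : Finset V, u ∉ S → v ∉ S → S.card < k →
      ∃ w : H.Walk u v, ∀ x ∈ w.support, x ∉ S :=
    fun S h1 h2 h3 => stepB_nonadj H k T hdom hTconn u v hne hnadj S h1 h2 h3
  obtain ⟨m, hm, hmdisj⟩ := part2core H u v hne hnadj k hcut
  refine hasIDPaths_of_lists H u v hne k m (fun i => (hm i).1) (fun i => (hm i).2.2.1)
    (fun i => (hm i).2.2.2.1) (fun i => (hm i).2.2.2.2) hmdisj ?_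
  intro i j hij heq
  obtain ⟨w, hw⟩ := List.exists_mem_of_ne_nil _ ((hm i).2.1)
  exact hmdisj i j hij w hw (heq ▸ hw)

theorem case_adj {V : Type*} [Fintype V] (H : SimpleGraph V) (k : ℕ) (hk : 0 < k) (T : Set V)
    (hdom : ∀ v : V, v ∉ T → k ≤ (T ∩ H.neighborSet v).ncard)
    (hTconn : ∀ u v : V, u ∈ T → v ∈ T → u ≠ v → HasIDPaths H u v k)
    (u v : V) (hadj : H.Adj u v) : HasIDPaths H u v k := by
  classical
  obtain ⟨k', rfl⟩ : ∃ k', k = k' + 1 := ⟨k - 1, (Nat.succ_pred_eq_of_pos hk).symm⟩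
  set G' : SimpleGraph V := H.deleteEdges {s(u, v)} with hG'
  have hne : u ≠ v := H.ne_of_adj hadj
  have hnadj' : ¬ G'.Adj u v := by
    rw [hG', SimpleGraph.deleteEdges_adj]
    rintro ⟨-, h⟩
    exact h rfl
  have hcut : ∀ S : Finset V, u ∉ S → v ∉ S → S.card < k' →
      ∃ w : G'.Walk u v, ∀ x ∈ w.support, x ∉ S := by
    intro S h1 h2 h3
    exact stepB_adj H (k' + 1) T hdom hTconn u v hne hadj S h1 h2 (by omega)
  obtain ⟨m, hm, hmdisj⟩ := part2core G' u v hne hnadj' k' hcut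
  have hG'le : ∀ a b : V, G'.Adj a b → H.Adj a b := by
    intro a b h
    rw [hG', SimpleGraph.deleteEdges_adj] at h
    exact h.1
  refine hasIDPaths_of_lists H u v hne (k' + 1) (fun i => Fin.cases [] m i)
    ?_ ?_ ?_ ?_ ?_ ?_
  · intro i
    induction i using Fin.cases with
    | zero => simp
    | succ i' => simpa using (hm i').1
  · intro i
    induction i using Fin.cases with
    | zero => simp
    | succ i' => simpa using (hm i').2.2.1
  · intro i
    induction i using Fin.cases with
    | zero => simp
    | succ i' => simpa using (hm i').2.2.2.1
  · intro i
    induction i using Fin.cases with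
    | zero =>
      simp only [Fin.cases_zero, List.nil_append]
      exact List.chain_cons.2 ⟨hadj, List.Chain.nil⟩
    | succ i' =>
      simp only [Fin.cases_succ]
      exact List.Chain.imp hG'le (hm i').2.2.2.2
  · intro i j hij
    induction i using Fin.cases with
    | zero => simp
    | succ i' =>
      induction j using Fin.cases with
      | zero => simp
      | succ j' =>
        simpa using hmdisj i' j' (fun h => hij (congrArg Fin.succ h))
  · intro i j hij
    induction i using Fin.cases with
    | zero =>
      induction j using Fin.cases with
      | zero => exact absurd rfl hij
      | succ j' =>
        simp only [Fin.cases_zero, Fin.cases_succ]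
        exact fun h => (hm j').2.1 h.symm
    | succ i' =>
      induction j using Fin.cases with
      | zero =>
        simp only [Fin.cases_zero, Fin.cases_succ]
        exact (hm i').2.1
      | succ j' =>
        simp only [Fin.cases_succ]
        intro heq
        obtain ⟨w, hw⟩ := List.exists_mem_of_ne_nil _ ((hm i').2.1)
        exact hmdisj i' j' (fun h => hij (congrArg Fin.succ h)) w hw (heq ▸ hw)

end MengerAux

/-- If `T` is a `k`-dominating set of `H` (every node outside `T` has at least `k`
neighbors in `T`) and `H` is `k`-`T`-connected (there are `k` internally disjoint paths
between every pair of nodes of `T`), then `H` is `k`-connected. -/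
theorem kT_connected_and_kDominating_implies_kConnected
    {V : Type*} [Fintype V] (H : SimpleGraph V) (k : ℕ) (hk : 0 < k)
    (T : Set V)
    (hdom : ∀ v : V, v ∉ T → k ≤ (T ∩ H.neighborSet v).ncard)
    (hTconn : ∀ u v : V, u ∈ T → v ∈ T → u ≠ v → HasIDPaths H u v k) :
    KConnected H k := by
  intro u v hne
  by_cases hadj : H.Adj u v
  · exact MengerAux.case_adj H k hk T hdom hTconn u v hadj
  · exact MengerAux.case_nonadj H k T hdom hTconn u v hne hadj
end

section
/- Let G = (V, E) be a finite simple graph, let m ≥ k ≥ 1 be integers, let T ⊆ V be an m-dominating set of G, and let S ⊆ V ∖ T. Let G_r be obtained from G by adding a new node r joined by edges exactly to a subset R ⊆ T with |R| = k, and let H_r be the subgraph of G_r induced by T ∪ S ∪ {r}. If H_r is k-(T, r)-connected, then H_r is k-in-connected to r, i.e., for every v ∈ T ∪ S there are k internally-disjoint v–r paths in H_r. -/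
open SimpleGraph

namespace KTrAux

variable {W : Type*}

/-- `C` separates `A` from `B` in `G`: every `A`-`B` walk meets `C`. -/
def Sep (G : SimpleGraph W) (A B C : Set W) : Prop :=
  ∀ ⦃a b : W⦄, a ∈ A → b ∈ B → ∀ p : G.Walk a b, ∃ c ∈ C, c ∈ p.support

/-- `k` pairwise (fully) disjoint `A`-`B` paths in `G`. -/
def Conn (G : SimpleGraph W) (A B : Set W) (k : ℕ) : Prop :=
  ∃ (a b : Fin k → W) (P : ∀ i, G.Walk (a i) (b i)),
    (∀ i, a i ∈ A) ∧ (∀ i, b i ∈ B) ∧ (∀ i, (P i).IsPath) ∧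
    ∀ i j, i ≠ j → ∀ w, w ∈ (P i).support → w ∉ (P j).support

lemma nil_of_isPath_loop {G : SimpleGraph W} {u : W} (p : G.Walk u u) (hp : p.IsPath) :
    p = Walk.nil := by
  cases p with
  | nil => rfl
  | cons h q =>
    rw [Walk.cons_isPath_iff] at hp
    exact absurd q.end_mem_support hp.2

/-- Prefix of a walk up to the first vertex in `X`. -/
lemma prefixUntil {G : SimpleGraph W} (X : Set W) :
    ∀ {a b : W} (p : G.Walk a b), (∃ z ∈ X, z ∈ p.support) →
    ∃ w, w ∈ X ∧ ∃ q : G.Walk a w, (∀ z ∈ q.support, z ∈ p.support) ∧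
      (∀ z ∈ q.support, z ∈ X → z = w) ∧ (∀ e ∈ q.edges, e ∈ p.edges) ∧
      (p.IsPath → q.IsPath) := by
  intro a b p
  induction p with
  | nil =>
    rintro ⟨z, hzX, hz⟩
    simp only [Walk.support_nil, List.mem_singleton] at hz
    subst hz
    exact ⟨z, hzX, Walk.nil, by simp, by simp, by simp, fun _ => Walk.IsPath.nil⟩
  | @cons u c b h p ih =>
    intro hhit
    by_cases hu : u ∈ X
    · exact ⟨u, hu, Walk.nil, by simp, by simp, by simp, fun _ => Walk.IsPath.nil⟩
    · have hhit' : ∃ z ∈ X, z ∈ p.support := by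
        obtain ⟨z, hzX, hz⟩ := hhit
        rw [Walk.support_cons, List.mem_cons] at hz
        rcases hz with rfl | hz
        · exact absurd hzX hu
        · exact ⟨z, hzX, hz⟩
      obtain ⟨w, hwX, q, hsub, hXw, hedge, hpath⟩ := ih hhit'
      refine ⟨w, hwX, Walk.cons h q, ?_, ?_, ?_, ?_⟩
      · intro z hz
        rw [Walk.support_cons, List.mem_cons] at hz ⊢
        exact hz.imp id (hsub z)
      · intro z hz hzX
        rw [Walk.support_cons, List.mem_cons] at hz
        rcases hz with rfl | hz
        · exact absurd hzX hu
        · exact hXw z hz hzX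
      · intro e he
        rw [Walk.edges_cons, List.mem_cons] at he ⊢
        exact he.imp id (hedge e)
      · intro hp
        rw [Walk.cons_isPath_iff] at hp ⊢
        exact ⟨hpath hp.1, fun hc => hp.2 (hsub u hc)⟩

lemma exists_fin_inj [Finite W] {s : Set W} {k : ℕ} (h : k ≤ s.ncard) :
    ∃ f : Fin k → W, Function.Injective f ∧ ∀ i, f i ∈ s := by
  classical
  have := Fintype.ofFinite W
  have hfin : s.Finite := Set.toFinite s
  rw [Set.ncard_eq_toFinset_card'] at h
  obtain ⟨t, hts, htc⟩ := Finset.exists_subset_card_eq h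
  let e := t.equivFin
  refine ⟨fun i => (e.symm (Fin.cast htc.symm i) : W), ?_, ?_⟩
  · intro i j hij
    have := e.symm.injective (Subtype.ext hij)
    simpa [Fin.ext_iff] using congrArg Fin.val this
  · intro i
    have := (e.symm (Fin.cast htc.symm i)).2
    exact Set.mem_toFinset.mp (hts this)

lemma conn_of_no_edges {G : SimpleGraph W} {A B : Set W} {k : ℕ} [Finite W]
    (hE : G.edgeSet = ∅) (hsep : ∀ C, Sep G A B C → k ≤ C.ncard) : Conn G A B k := by
  have hniladj : ∀ {u v : W}, ¬ G.Adj u v := by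
    intro u v h
    have := (G.mem_edgeSet).mpr h
    rw [hE] at this
    exact this
  have hAB : Sep G A B (A ∩ B) := by
    intro a b ha hb p
    cases p with
    | nil => exact ⟨a, ⟨ha, hb⟩, by simp⟩
    | cons h q => exact absurd h hniladj
  obtain ⟨f, hfinj, hfmem⟩ := exists_fin_inj (hsep _ hAB)
  refine ⟨f, f, fun i => Walk.nil, fun i => (hfmem i).1, fun i => (hfmem i).2,
    fun i => Walk.IsPath.nil, ?_⟩
  intro i j hij w hwi hwj
  simp only [Walk.support_nil, List.mem_singleton] at hwi hwj
  exact hij (hfinj (hwi ▸ hwj))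

/-- contraction of the edge `xy`, realized on the same vertex set: `y` becomes isolated
and its edges are transferred to `x`. -/
def contract (G : SimpleGraph W) (x y : W) : SimpleGraph W where
  Adj u v := u ≠ v ∧ u ≠ y ∧ v ≠ y ∧
    (G.Adj u v ∨ (u = x ∧ G.Adj y v) ∨ (v = x ∧ G.Adj y u))
  symm := by
    constructor
    rintro u v ⟨h1, h2, h3, h4⟩
    refine ⟨h1.symm, h3, h2, ?_⟩
    rcases h4 with h | ⟨rfl, h⟩ | ⟨rfl, h⟩
    · exact Or.inl h.symm
    · exact Or.inr (Or.inr ⟨rfl, h⟩)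
    · exact Or.inr (Or.inl ⟨rfl, h⟩)
  loopless := ⟨fun u h => h.1 rfl⟩

lemma contract_not_mem_y {G : SimpleGraph W} {x y : W} :
    ∀ {a b : W} (p : (contract G x y).Walk a b), a ≠ y → b ≠ y → y ∉ p.support := by
  intro a b p
  induction p with
  | nil => intro ha _; simpa using fun h => ha h.symm
  | @cons u c b h p ih =>
    intro ha hb
    rw [Walk.support_cons, List.mem_cons]
    rintro (rfl | hy)
    · exact ha rfl
    · exact ih (fun hc => h.2.2.1 hc) hb hy

/-- lift a walk of the contraction avoiding `x` back to `G`. -/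
lemma contract_lift_avoid {G : SimpleGraph W} {x y : W} {a b : W}
    (p : (contract G x y).Walk a b) (hx : x ∉ p.support) :
    ∃ q : G.Walk a b, q.support = p.support := by
  induction p with
  | nil => exact ⟨Walk.nil, rfl⟩
  | @cons u c b h p ih =>
    rw [Walk.support_cons, List.mem_cons] at hx
    push_neg at hx
    have hu : u ≠ x := fun hc => hx.1 hc.symm
    have hc : c ≠ x := fun hc => hx.2 (hc ▸ p.start_mem_support)
    have hadj : G.Adj u c := by
      rcases h.2.2.2 with h' | ⟨hux, _⟩ | ⟨hcx, _⟩
      · exact h'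
      · exact absurd hux hu
      · exact absurd hcx hc
    obtain ⟨q, hq⟩ := ih hx.2
    exact ⟨Walk.cons hadj q, by simp [hq]⟩

/-- lift a path of the contraction starting at `x` back to `G`; the start becomes `x` or `y`. -/
lemma contract_lift_from_x {G : SimpleGraph W} {x y : W} (hxy : G.Adj x y) {d : W}
    (q : (contract G x y).Walk x d) (hq : q.IsPath) (hd : d ≠ y) :
    ∃ w, (w = x ∨ w = y) ∧ ∃ r : G.Walk w d, r.IsPath ∧
      (∀ z ∈ r.support, z ∈ q.support ∨ z = y) ∧
      (∀ z ∈ r.support, (z = x ∨ z = y) → z = w) := by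
  cases q with
  | nil =>
    refine ⟨x, Or.inl rfl, Walk.nil, Walk.IsPath.nil, by simp, by simp⟩
  | @cons u c b h q' =>
    rw [Walk.cons_isPath_iff] at hq
    have hxq' : x ∉ q'.support := hq.2
    have hcy : c ≠ y := h.2.2.1
    have hyq' : y ∉ q'.support := contract_not_mem_y q' hcy hd
    obtain ⟨r', hr'⟩ := contract_lift_avoid q' hxq'
    have hr'path : r'.IsPath := by
      rw [Walk.isPath_def, hr', ← Walk.isPath_def]
      exact hq.1
    have hadj : G.Adj x c ∨ G.Adj y c := by
      rcases h.2.2.2 with h' | ⟨_, h'⟩ | ⟨hcx, _⟩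
      · exact Or.inl h'
      · exact Or.inr h'
      · exact absurd hcx.symm h.1
    by_cases hxc : G.Adj x c
    · refine ⟨x, Or.inl rfl, Walk.cons hxc r', ?_, ?_, ?_⟩
      · rw [Walk.cons_isPath_iff]
        exact ⟨hr'path, by rw [hr']; exact hxq'⟩
      · intro z hz
        rw [Walk.support_cons, List.mem_cons, hr'] at hz
        exact Or.inl (by rw [Walk.support_cons, List.mem_cons]; exact hz)
      · intro z hz hzxy
        rw [Walk.support_cons, List.mem_cons, hr'] at hz
        rcases hzxy with rfl | rfl
        · rfl
        · rcases hz with h' | h'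
          · exact absurd h'.symm hxy.ne
          · exact absurd h' hyq'
    · have hyc : G.Adj y c := hadj.resolve_left hxc
      refine ⟨y, Or.inr rfl, Walk.cons hyc r', ?_, ?_, ?_⟩
      · rw [Walk.cons_isPath_iff]
        exact ⟨hr'path, by rw [hr']; exact hyq'⟩
      · intro z hz
        rw [Walk.support_cons, List.mem_cons, hr'] at hz
        rcases hz with rfl | hz
        · exact Or.inr rfl
        · exact Or.inl (by rw [Walk.support_cons, List.mem_cons]; exact Or.inr hz)
      · intro z hz hzxy
        rw [Walk.support_cons, List.mem_cons, hr'] at hz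
        rcases hzxy with rfl | rfl
        · rcases hz with h' | h'
          · exact absurd h' hxy.ne
          · exact absurd h' hxq'
        · rfl

lemma glue_paths {G : SimpleGraph W} {x y : W} (hxy : G.Adj x y) {ds dt u u' : W}
    (SP : G.Walk ds u) (EP : G.Walk u' dt) (hu : u = x ∨ u = y) (hu' : u' = x ∨ u' = y)
    (hSP : SP.IsPath) (hEP : EP.IsPath)
    (hSPxy : ∀ z ∈ SP.support, (z = x ∨ z = y) → z = u)
    (hEPxy : ∀ z ∈ EP.support, (z = x ∨ z = y) → z = u')
    (hint : ∀ z ∈ SP.support, z ∈ EP.support → z = x ∨ z = y) :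
    ∃ r : G.Walk ds dt, r.IsPath ∧ ∀ z ∈ r.support, z ∈ SP.support ∨ z ∈ EP.support := by
  by_cases h : u = u'
  · subst h
    refine ⟨SP.append EP, ?_, ?_⟩
    · rw [Walk.isPath_def, Walk.support_append]
      refine List.Nodup.append hSP.support_nodup ?_ ?_
      · have := hEP.support_nodup
        rw [EP.support_eq_cons] at this
        exact this.of_cons
      · intro z hz1 hz2
        have hz2' : z ∈ EP.support := by
          rw [EP.support_eq_cons]
          exact List.mem_cons_of_mem _ hz2
        have hzu : z = u := hSPxy z hz1 (hint z hz1 hz2')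
        subst hzu
        have := hEP.support_nodup
        rw [EP.support_eq_cons] at this
        exact List.Nodup.notMem this hz2
    · intro z hz
      rw [Walk.mem_support_append_iff] at hz
      exact hz
  · have huu' : G.Adj u u' := by
      rcases hu with rfl | rfl <;> rcases hu' with rfl | rfl
      · exact absurd rfl h
      · exact hxy
      · exact hxy.symm
      · exact absurd rfl h
    refine ⟨SP.append (Walk.cons huu' EP), ?_, ?_⟩
    · rw [Walk.isPath_def, Walk.support_append, Walk.support_cons, List.tail_cons]
      refine List.Nodup.append hSP.support_nodup hEP.support_nodup ?_
      intro z hz1 hz2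
      have hzu : z = u := hSPxy z hz1 (hint z hz1 hz2)
      have hzu' : z = u' := hEPxy z hz2 (hint z hz1 hz2)
      exact h (hzu ▸ hzu' ▸ rfl)
    · intro z hz
      rw [Walk.mem_support_append_iff, Walk.support_cons, List.mem_cons] at hz
      rcases hz with hz | rfl | hz
      · exact Or.inl hz
      · exact Or.inl SP.end_mem_support
      · exact Or.inr hz

/-- lift a full path of the contraction back to `G`, with prescribed endpoints. -/
lemma contract_lift_path [DecidableEq W] {G : SimpleGraph W} {x y : W} (hxy : G.Adj x y) {s t : W}
    (p : (contract G x y).Walk s t) (hp : p.IsPath) (hs : s ≠ y) (ht : t ≠ y)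
    {ds dt : W} (hds : ds = s ∨ (s = x ∧ ds = y)) (hdt : dt = t ∨ (t = x ∧ dt = y)) :
    ∃ r : G.Walk ds dt, r.IsPath ∧ (∀ z ∈ r.support, z ∈ p.support ∨ z = y) ∧
      (y ∈ r.support → x ∈ p.support) := by
  by_cases hx : x ∈ p.support
  · have hq1p : (p.takeUntil x hx).IsPath := hp.takeUntil hx
    have hq2p : (p.dropUntil x hx).IsPath := hp.dropUntil hx
    set q₁ := p.takeUntil x hx with hq₁def
    set q₂ := p.dropUntil x hx with hq₂def
    have hdisj : ∀ z, z ∈ q₁.support → z ∈ q₂.support → z = x := by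
      intro z hz1 hz2
      by_contra hzx
      rw [q₂.support_eq_cons, List.mem_cons] at hz2
      have hz2' : z ∈ q₂.support.tail := hz2.resolve_left hzx
      have hnd := hp.support_nodup
      rw [← p.take_spec hx, Walk.support_append] at hnd
      exact (List.disjoint_of_nodup_append hnd) hz1 hz2'
    have hSP : ∃ (w : W) (SP : G.Walk ds w), (w = x ∨ w = y) ∧ SP.IsPath ∧
        (∀ z ∈ SP.support, z ∈ q₁.support ∨ z = y) ∧
        (∀ z ∈ SP.support, (z = x ∨ z = y) → z = w) := by
      rcases hds with rfl | ⟨hsx, hdsy⟩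
      · obtain ⟨w, hw, r₁, hr₁p, hr₁sub, hr₁xy⟩ :=
          contract_lift_from_x hxy q₁.reverse (hq1p.reverse) hs
        refine ⟨w, r₁.reverse, hw, hr₁p.reverse, ?_, ?_⟩
        · intro z hz
          rw [Walk.support_reverse, List.mem_reverse] at hz
          rcases hr₁sub z hz with h' | h'
          · rw [Walk.support_reverse, List.mem_reverse] at h'
            exact Or.inl h'
          · exact Or.inr h'
        · intro z hz
          rw [Walk.support_reverse, List.mem_reverse] at hz
          exact hr₁xy z hz
      · refine ⟨y, (Walk.nil : G.Walk y y).copy hdsy.symm rfl, Or.inr rfl, ?_, ?_, ?_⟩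
        · rw [Walk.isPath_def, Walk.support_copy]
          simp
        · intro z hz
          rw [Walk.support_copy, Walk.support_nil, List.mem_singleton] at hz
          exact Or.inr hz
        · intro z hz _
          rw [Walk.support_copy, Walk.support_nil, List.mem_singleton] at hz
          exact hz
    have hEP : ∃ (w' : W) (EP : G.Walk w' dt), (w' = x ∨ w' = y) ∧ EP.IsPath ∧
        (∀ z ∈ EP.support, z ∈ q₂.support ∨ z = y) ∧
        (∀ z ∈ EP.support, (z = x ∨ z = y) → z = w') := by
      rcases hdt with hdtt | ⟨htx, hdty⟩
      · obtain ⟨w', hw', r₂, hr₂p, hr₂sub, hr₂xy⟩ :=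
          contract_lift_from_x hxy q₂ hq2p ht
        exact ⟨w', r₂.copy rfl hdtt.symm, hw', by
            rw [Walk.isPath_def, Walk.support_copy, ← Walk.isPath_def]; exact hr₂p, by
          intro z hz
          rw [Walk.support_copy] at hz
          exact hr₂sub z hz, by
          intro z hz
          rw [Walk.support_copy] at hz
          exact hr₂xy z hz⟩
      · refine ⟨y, (Walk.nil : G.Walk y y).copy rfl hdty.symm, Or.inr rfl, ?_, ?_, ?_⟩
        · rw [Walk.isPath_def, Walk.support_copy]
          simp
        · intro z hz
          rw [Walk.support_copy, Walk.support_nil, List.mem_singleton] at hz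
          exact Or.inr hz
        · intro z hz _
          rw [Walk.support_copy, Walk.support_nil, List.mem_singleton] at hz
          exact hz
    obtain ⟨w, SP, hw, hSPp, hSPsub, hSPxy⟩ := hSP
    obtain ⟨w', EP, hw', hEPp, hEPsub, hEPxy⟩ := hEP
    have hint : ∀ z ∈ SP.support, z ∈ EP.support → z = x ∨ z = y := by
      intro z hz1 hz2
      rcases hSPsub z hz1 with h1 | h1
      · rcases hEPsub z hz2 with h2 | h2
        · exact Or.inl (hdisj z h1 h2)
        · exact Or.inr h2
      · exact Or.inr h1
    obtain ⟨r, hrp, hrsub⟩ := glue_paths hxy SP EP hw hw' hSPp hEPp hSPxy hEPxy hint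
    refine ⟨r, hrp, ?_, fun _ => hx⟩
    intro z hz
    rcases hrsub z hz with h' | h'
    · rcases hSPsub z h' with h'' | h''
      · exact Or.inl (p.support_takeUntil_subset hx h'')
      · exact Or.inr h''
    · rcases hEPsub z h' with h'' | h''
      · exact Or.inl (p.support_dropUntil_subset hx h'')
      · exact Or.inr h''
  · have hs' : ds = s := by
      rcases hds with rfl | ⟨rfl, _⟩
      · rfl
      · exact absurd p.start_mem_support hx
    have ht' : dt = t := by
      rcases hdt with rfl | ⟨rfl, _⟩
      · rfl
      · exact absurd p.end_mem_support hx
    subst hs'; subst ht'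
    obtain ⟨q, hq⟩ := contract_lift_avoid p hx
    have hyq : y ∉ p.support := contract_not_mem_y p hs ht
    refine ⟨q, ?_, ?_, ?_⟩
    · rw [Walk.isPath_def, hq, ← Walk.isPath_def]; exact hp
    · intro z hz
      rw [hq] at hz
      exact Or.inl hz
    · intro hy
      rw [hq] at hy
      exact absurd hy hyq

lemma contract_proj [DecidableEq W] {G : SimpleGraph W} {x y : W} (hne : x ≠ y) :
    ∀ {a b : W} (p : G.Walk a b), ∃ q : (contract G x y).Walk
      (if a = y then x else a) (if b = y then x else b),
      ∀ z ∈ q.support, ∃ u ∈ p.support, (if u = y then x else u) = z := by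
  intro a b p
  induction p with
  | nil =>
    refine ⟨Walk.nil, ?_⟩
    intro z hz
    rw [Walk.support_nil, List.mem_singleton] at hz
    exact ⟨_, by simp, hz.symm⟩
  | @cons u c b h p ih =>
    obtain ⟨q', hq'⟩ := ih
    by_cases hac : (if u = y then x else u) = (if c = y then x else c)
    · refine ⟨q'.copy hac.symm rfl, ?_⟩
      intro z hz
      rw [Walk.support_copy] at hz
      obtain ⟨w, hw, hwz⟩ := hq' z hz
      exact ⟨w, by rw [Walk.support_cons]; exact List.mem_cons_of_mem _ hw, hwz⟩
    · have hadj : (contract G x y).Adj (if u = y then x else u) (if c = y then x else c) := by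
        refine ⟨hac, ?_, ?_, ?_⟩
        · split <;> [exact hne; assumption]
        · split <;> [exact hne; assumption]
        · by_cases hu : u = y <;> by_cases hc : c = y
          · exact absurd (hu.trans hc.symm) h.ne
          · rw [if_pos hu, if_neg hc]
            exact Or.inr (Or.inl ⟨rfl, hu ▸ h⟩)
          · rw [if_neg hu, if_pos hc]
            exact Or.inr (Or.inr ⟨rfl, hc ▸ h.symm⟩)
          · rw [if_neg hu, if_neg hc]
            exact Or.inl h
      refine ⟨Walk.cons hadj q', ?_⟩
      intro z hz
      rw [Walk.support_cons, List.mem_cons] at hz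
      rcases hz with rfl | hz
      · exact ⟨u, by rw [Walk.support_cons]; exact List.mem_cons_self, rfl⟩
      · obtain ⟨w, hw, hwz⟩ := hq' z hz
        exact ⟨w, by rw [Walk.support_cons]; exact List.mem_cons_of_mem _ hw, hwz⟩

lemma contract_card_lt [Finite W] {G : SimpleGraph W} {x y : W} (hxy : G.Adj x y) :
    (contract G x y).edgeSet.ncard < G.edgeSet.ncard := by
  classical
  have hne : x ≠ y := hxy.ne
  set E' := (contract G x y).edgeSet with hE'
  have hyfree : ∀ e ∈ E', y ∉ e := by
    intro e
    induction e with
    | _ u v =>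
      intro he hy
      rw [SimpleGraph.mem_edgeSet] at he
      rw [Sym2.mem_iff] at hy
      rcases hy with rfl | rfl
      · exact he.2.1 rfl
      · exact he.2.2.1 rfl
  have hform : ∀ e ∈ E', e ∉ G.edgeSet → ∃ v, e = s(x, v) ∧ v ≠ x ∧ v ≠ y ∧ G.Adj y v := by
    intro e
    induction e with
    | _ u v =>
      intro he hnE
      rw [SimpleGraph.mem_edgeSet] at he
      rw [SimpleGraph.mem_edgeSet] at hnE
      rcases he.2.2.2 with h' | ⟨rfl, h'⟩ | ⟨rfl, h'⟩
      · exact absurd h' hnE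
      · exact ⟨v, rfl, fun hc => he.1 hc.symm, he.2.2.1, h'⟩
      · exact ⟨u, Sym2.eq_swap, fun hc => he.1 hc, he.2.1, h'⟩
  set φ : Sym2 W → Sym2 W :=
    fun e => if e ∈ G.edgeSet then e else Sym2.map (fun w => if w = x then y else w) e with hφ
  have hφform : ∀ e ∈ E', e ∉ G.edgeSet → ∃ v, e = s(x, v) ∧ v ≠ x ∧ v ≠ y ∧ G.Adj y v ∧
      φ e = s(y, v) := by
    intro e he hnE
    obtain ⟨v, rfl, hvx, hvy, hadj⟩ := hform e he hnE
    refine ⟨v, rfl, hvx, hvy, hadj, ?_⟩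
    rw [hφ]
    simp only [if_neg hnE, Sym2.map_pair_eq]
    simp [if_neg hvx]
  have himg : ∀ e ∈ E', φ e ∈ G.edgeSet \ {s(x, y)} := by
    intro e he
    by_cases hE : e ∈ G.edgeSet
    · have : φ e = e := by rw [hφ]; simp only [if_pos hE]
      rw [this]
      refine ⟨hE, ?_⟩
      intro hc
      rw [Set.mem_singleton_iff] at hc
      exact hyfree e he (hc ▸ Sym2.mem_mk_right x y)
    · obtain ⟨v, _, hvx, hvy, hadj, hmap⟩ := hφform e he hE
      rw [hmap]
      refine ⟨by rwa [SimpleGraph.mem_edgeSet], ?_⟩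
      intro hc
      rw [Set.mem_singleton_iff, Sym2.eq_iff] at hc
      rcases hc with ⟨rfl, _⟩ | ⟨_, hc2⟩
      · exact hne rfl
      · exact hvx hc2
  have hinj : Set.InjOn φ E' := by
    intro e1 he1 e2 he2 heq
    by_cases h1 : e1 ∈ G.edgeSet <;> by_cases h2 : e2 ∈ G.edgeSet
    · rw [hφ] at heq
      simpa only [if_pos h1, if_pos h2] using heq
    · obtain ⟨v, _, hvx, hvy, hadj, hmap⟩ := hφform e2 he2 h2
      have he1eq : φ e1 = e1 := by rw [hφ]; simp only [if_pos h1]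
      rw [hmap, he1eq] at heq
      have : y ∈ e1 := by rw [heq]; exact Sym2.mem_mk_left y v
      exact absurd this (hyfree e1 he1)
    · obtain ⟨v, _, hvx, hvy, hadj, hmap⟩ := hφform e1 he1 h1
      have he2eq : φ e2 = e2 := by rw [hφ]; simp only [if_pos h2]
      rw [hmap, he2eq] at heq
      have : y ∈ e2 := by rw [← heq]; exact Sym2.mem_mk_left y v
      exact absurd this (hyfree e2 he2)
    · obtain ⟨v1, hv1e, hv1x, hv1y, _, hmap1⟩ := hφform e1 he1 h1
      obtain ⟨v2, hv2e, hv2x, hv2y, _, hmap2⟩ := hφform e2 he2 h2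
      rw [hmap1, hmap2, Sym2.eq_iff] at heq
      rcases heq with ⟨_, rfl⟩ | ⟨rfl, hc⟩
      · rw [hv1e, hv2e]
      · exact absurd hc hv1y
  have hxyE : s(x, y) ∈ G.edgeSet := by rwa [SimpleGraph.mem_edgeSet]
  have h1 : E'.ncard = (φ '' E').ncard := (Set.ncard_image_of_injOn hinj).symm
  have h2 : (φ '' E').ncard ≤ (G.edgeSet \ {s(x, y)}).ncard := by
    refine Set.ncard_le_ncard ?_ ((Set.toFinite _).diff)
    rintro e ⟨e', he', rfl⟩
    exact himg e' he'
  have h3 : (G.edgeSet \ {s(x, y)}).ncard < G.edgeSet.ncard := by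
    refine Set.ncard_lt_ncard ?_ (Set.toFinite _)
    refine ⟨Set.diff_subset, fun hsub => ?_⟩
    exact (hsub hxyE).2 rfl
  omega

theorem menger [Finite W] :
    ∀ (n : ℕ) (G : SimpleGraph W) (A B : Set W) (k : ℕ), G.edgeSet.ncard ≤ n →
      (∀ C, Sep G A B C → k ≤ C.ncard) → Conn G A B k := by
  classical
  intro n
  induction n with
  | zero =>
    intro G A B k hn hsep
    have hE : G.edgeSet = ∅ := by
      rw [← Set.ncard_eq_zero (Set.toFinite _)]
      omega
    exact conn_of_no_edges hE hsep
  | succ n ih =>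
    intro G A B k hn hsep
    by_cases hE : G.edgeSet = ∅
    · exact conn_of_no_edges hE hsep
    · obtain ⟨e₀, he₀⟩ := Set.nonempty_iff_ne_empty.mpr hE
      obtain ⟨x, y, hxy⟩ : ∃ x y, G.Adj x y := by
        induction e₀ with
        | _ x y => exact ⟨x, y, by rwa [SimpleGraph.mem_edgeSet] at he₀⟩
      clear he₀
      set G' := contract G x y with hG'
      set A' := {w | (w ∈ A ∧ w ≠ y) ∨ (w = x ∧ y ∈ A)} with hA'
      set B' := {w | (w ∈ B ∧ w ≠ y) ∨ (w = x ∧ y ∈ B)} with hB'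
      have hπA : ∀ a ∈ A, (if a = y then x else a) ∈ A' := by
        intro a ha
        by_cases hay : a = y
        · rw [if_pos hay]; exact Or.inr ⟨rfl, hay ▸ ha⟩
        · rw [if_neg hay]; exact Or.inl ⟨ha, hay⟩
      have hπB : ∀ b ∈ B, (if b = y then x else b) ∈ B' := by
        intro b hb
        by_cases hby : b = y
        · rw [if_pos hby]; exact Or.inr ⟨rfl, hby ▸ hb⟩
        · rw [if_neg hby]; exact Or.inl ⟨hb, hby⟩
      by_cases hcase : ∀ C, Sep G' A' B' C → k ≤ C.ncard
      · -- contraction case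
        have hG'card : G'.edgeSet.ncard ≤ n :=
          Nat.lt_succ_iff.mp (lt_of_lt_of_le (contract_card_lt hxy) hn)
        obtain ⟨a, b, P, haA, hbB, hPp, hPdisj⟩ := ih G' A' B' k hG'card hcase
        have hay : ∀ i, a i ≠ y := by
          intro i
          rcases haA i with ⟨_, h⟩ | ⟨h, _⟩
          · exact h
          · exact h ▸ hxy.ne
        have hby : ∀ i, b i ≠ y := by
          intro i
          rcases hbB i with ⟨_, h⟩ | ⟨h, _⟩
          · exact h
          · exact h ▸ hxy.ne
        have hds : ∀ i, ∃ d, d ∈ A ∧ (d = a i ∨ (a i = x ∧ d = y)) := by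
          intro i
          rcases haA i with ⟨hA, _⟩ | ⟨hx', hyA⟩
          · exact ⟨a i, hA, Or.inl rfl⟩
          · by_cases hxA : x ∈ A
            · exact ⟨a i, by rw [hx']; exact hxA, Or.inl rfl⟩
            · exact ⟨y, hyA, Or.inr ⟨hx', rfl⟩⟩
        have hdt : ∀ i, ∃ d, d ∈ B ∧ (d = b i ∨ (b i = x ∧ d = y)) := by
          intro i
          rcases hbB i with ⟨hB, _⟩ | ⟨hx', hyB⟩
          · exact ⟨b i, hB, Or.inl rfl⟩
          · by_cases hxB : x ∈ B
            · exact ⟨b i, by rw [hx']; exact hxB, Or.inl rfl⟩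
            · exact ⟨y, hyB, Or.inr ⟨hx', rfl⟩⟩
        choose ds hdsA hdss using hds
        choose dt hdtB hdts using hdt
        have hlift : ∀ i, ∃ r : G.Walk (ds i) (dt i), r.IsPath ∧
            (∀ z ∈ r.support, z ∈ (P i).support ∨ z = y) ∧
            (y ∈ r.support → x ∈ (P i).support) := by
          intro i
          exact contract_lift_path hxy (P i) (hPp i) (hay i) (hby i) (hdss i) (hdts i)
        choose R hRp hRsub hRy using hlift
        refine ⟨ds, dt, R, hdsA, hdtB, hRp, ?_⟩
        intro i j hij w hwi hwj
        rcases hRsub i w hwi with h1 | rfl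
        · rcases hRsub j w hwj with h2 | h2
          · exact hPdisj i j hij w h1 h2
          · subst h2
            exact contract_not_mem_y (P i) (hay i) (hby i) h1
        · exact hPdisj i j hij x (hRy i hwi) (hRy j hwj)
      · -- cut case
        push_neg at hcase
        obtain ⟨C₀, hC₀sep, hC₀lt⟩ := hcase
        have hxC₀ : x ∈ C₀ := by
          by_contra hxC
          have hsep' : Sep G A B (C₀ \ {y}) := by
            intro a b ha hb p
            obtain ⟨q, hq⟩ := contract_proj (G := G) hxy.ne p
            obtain ⟨c, hcC, hcq⟩ := hC₀sep (hπA a ha) (hπB b hb) q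
            obtain ⟨u, hu, hu2⟩ := hq c hcq
            by_cases huy : u = y
            · rw [if_pos huy] at hu2
              exact absurd (hu2 ▸ hcC) hxC
            · rw [if_neg huy] at hu2
              exact ⟨c, ⟨hcC, fun hcy => huy (hu2 ▸ hcy : u = y)⟩, hu2 ▸ hu⟩
          have h1 := hsep _ hsep'
          have h2 : (C₀ \ {y}).ncard ≤ C₀.ncard :=
            Set.ncard_le_ncard Set.diff_subset (Set.toFinite _)
          omega
        set X := C₀ ∪ {y} with hX
        have hXsep : Sep G A B X := by
          intro a b ha hb p
          obtain ⟨q, hq⟩ := contract_proj (G := G) hxy.ne p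
          obtain ⟨c, hcC, hcq⟩ := hC₀sep (hπA a ha) (hπB b hb) q
          obtain ⟨u, hu, hu2⟩ := hq c hcq
          by_cases huy : u = y
          · exact ⟨y, Or.inr rfl, huy ▸ hu⟩
          · rw [if_neg huy] at hu2
            exact ⟨c, Or.inl hcC, hu2 ▸ hu⟩
        have hXk : k ≤ X.ncard := hsep X hXsep
        have hXcard : X.ncard ≤ k := by
          have h1 : X.ncard ≤ C₀.ncard + ({y} : Set W).ncard :=
            Set.ncard_union_le _ _
          rw [Set.ncard_singleton] at h1
          omega
        have hXk' : X.ncard = k := le_antisymm hXcard hXk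
        have hyX : y ∈ X := Or.inr rfl
        have hxX : x ∈ X := Or.inl hxC₀
        set Gd := G.deleteEdges {s(x, y)} with hGd
        have hGdedge : Gd.edgeSet = G.edgeSet \ {s(x, y)} := SimpleGraph.edgeSet_deleteEdges _
        have hGdcard : Gd.edgeSet.ncard ≤ n := by
          have hlt : Gd.edgeSet.ncard < G.edgeSet.ncard := by
            rw [hGdedge]
            refine Set.ncard_lt_ncard ⟨Set.diff_subset, fun hsub => ?_⟩ (Set.toFinite _)
            exact (hsub (by rwa [SimpleGraph.mem_edgeSet])).2 rfl
          omega
        -- a Gd-prefix up to the first X-vertex of any G-walk that meets X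
        have hprefix : ∀ {a b : W} (p : G.Walk a b), (∃ z ∈ X, z ∈ p.support) →
            ∃ w ∈ X, ∃ q : Gd.Walk a w, (∀ z ∈ q.support, z ∈ p.support) ∧
              (∀ z ∈ q.support, z ∈ X → z = w) := by
          intro a b p hhit
          obtain ⟨w, hwX, q, hqsub, hqX, hqe, _⟩ := prefixUntil X p hhit
          have hqGd : ∀ e ∈ q.edges, e ∈ Gd.edgeSet := by
            intro e he
            rw [hGdedge]
            refine ⟨q.edges_subset_edgeSet he, ?_⟩
            intro hc
            rw [Set.mem_singleton_iff] at hc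
            subst hc
            have hx' := q.fst_mem_support_of_mem_edges he
            have hy' := q.snd_mem_support_of_mem_edges he
            exact hxy.ne ((hqX x hx' hxX).trans (hqX y hy' hyX).symm)
          refine ⟨w, hwX, q.transfer Gd hqGd, ?_, ?_⟩
          · intro z hz
            rw [Walk.support_transfer] at hz
            exact hqsub z hz
          · intro z hz
            rw [Walk.support_transfer] at hz
            exact hqX z hz
        have hsepAX : ∀ C, Sep Gd A X C → k ≤ C.ncard := by
          intro C hC
          refine hsep C ?_
          intro a b ha hb p
          obtain ⟨c₀, hc₀X, hc₀p⟩ := hXsep ha hb p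
          obtain ⟨w, hwX, q, hqsub, _⟩ := hprefix p ⟨c₀, hc₀X, hc₀p⟩
          obtain ⟨c, hcC, hcsup⟩ := hC ha hwX q
          exact ⟨c, hcC, hqsub _ hcsup⟩
        have hsepXB : ∀ C, Sep Gd X B C → k ≤ C.ncard := by
          intro C hC
          refine hsep C ?_
          intro a b ha hb p
          obtain ⟨c₀, hc₀X, hc₀p⟩ := hXsep ha hb p
          have hc₀p' : c₀ ∈ p.reverse.support := by
            rwa [Walk.support_reverse, List.mem_reverse]
          obtain ⟨w, hwX, q, hqsub, _⟩ := hprefix p.reverse ⟨c₀, hc₀X, hc₀p'⟩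
          obtain ⟨c, hcC, hcsup⟩ := hC hwX hb q.reverse
          rw [Walk.support_reverse, List.mem_reverse] at hcsup
          have := hqsub _ hcsup
          rw [Walk.support_reverse, List.mem_reverse] at this
          exact ⟨c, hcC, this⟩
        obtain ⟨a1, b1, P1, hP1A, hP1X, hP1p, hP1d⟩ := ih Gd A X k hGdcard hsepAX
        obtain ⟨a2, b2, P2, hP2X, hP2B, hP2p, hP2d⟩ := ih Gd X B k hGdcard hsepXB
        -- truncate P1 i at its first X-vertex
        have htr1 : ∀ i, ∃ w ∈ X, ∃ q : Gd.Walk (a1 i) w,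
            (∀ z ∈ q.support, z ∈ (P1 i).support) ∧
            (∀ z ∈ q.support, z ∈ X → z = w) ∧ q.IsPath := by
          intro i
          obtain ⟨w, hw, q, hsub, hXp, _, hpath⟩ :=
            prefixUntil X (P1 i) ⟨b1 i, hP1X i, Walk.end_mem_support _⟩
          exact ⟨w, hw, q, hsub, hXp, hpath (hP1p i)⟩
        choose w1 hw1X Q1 hQ1sub hQ1X hQ1p using htr1
        -- truncate P2 j from its last X-vertex
        have htr2 : ∀ j, ∃ z ∈ X, ∃ q : Gd.Walk z (b2 j),
            (∀ u ∈ q.support, u ∈ (P2 j).support) ∧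
            (∀ u ∈ q.support, u ∈ X → u = z) ∧ q.IsPath := by
          intro j
          have hhit : ∃ z ∈ X, z ∈ (P2 j).reverse.support := by
            refine ⟨a2 j, hP2X j, ?_⟩
            rw [Walk.support_reverse, List.mem_reverse]
            exact Walk.start_mem_support _
          obtain ⟨w, hw, q, hsub, hXp, _, hpath⟩ := prefixUntil X (P2 j).reverse hhit
          refine ⟨w, hw, q.reverse, ?_, ?_, (hpath (hP2p j).reverse).reverse⟩
          · intro u hu
            rw [Walk.support_reverse, List.mem_reverse] at hu
            have := hsub u hu
            rwa [Walk.support_reverse, List.mem_reverse] at this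
          · intro u hu
            rw [Walk.support_reverse, List.mem_reverse] at hu
            exact hXp u hu
        choose z2 hz2X Q2 hQ2sub hQ2X hQ2p using htr2
        have hw1inj : Function.Injective w1 := by
          intro i j h
          by_contra hij
          refine hP1d i j hij (w1 i) ?_ ?_
          · exact hQ1sub i _ (Walk.end_mem_support _)
          · rw [h]
            exact hQ1sub j _ (Walk.end_mem_support _)
        have hz2inj : Function.Injective z2 := by
          intro i j h
          by_contra hij
          refine hP2d i j hij (z2 i) ?_ ?_
          · exact hQ2sub i _ (Walk.start_mem_support _)
          · rw [h]
            exact hQ2sub j _ (Walk.start_mem_support _)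
        have hsurj : ∀ u ∈ X, ∃ j, z2 j = u := by
          have hsub : Set.range z2 ⊆ X := by
            rintro _ ⟨j, rfl⟩
            exact hz2X j
          have hcard : (Set.range z2).ncard = k := by
            rw [← Set.image_univ, Set.ncard_image_of_injective _ hz2inj, Set.ncard_univ]
            simp
          have hEQ : Set.range z2 = X :=
            Set.eq_of_subset_of_ncard_le hsub (by omega) (Set.toFinite _)
          intro u hu
          rw [← hEQ] at hu
          exact hu
        choose σ hσ using fun i => hsurj (w1 i) (hw1X i)
        have hσinj : Function.Injective σ := by
          intro i j h
          apply hw1inj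
          rw [← hσ i, ← hσ j, h]
        -- key: common vertices of the truncated pieces are their X endpoints
        have hkey : ∀ i j u, u ∈ (Q1 i).support → u ∈ (Q2 j).support →
            u = w1 i ∧ u = z2 j := by
          intro i j u hu1 hu2
          by_cases huX : u ∈ X
          · exact ⟨hQ1X i u hu1 huX, hQ2X j u hu2 huX⟩
          · exfalso
            set t1 := (Q1 i).takeUntil u hu1 with ht1
            set t2 := (Q2 j).dropUntil u hu2 with ht2
            have hedges : ∀ e ∈ (t1.append t2).edges, e ∈ G.edgeSet := by
              intro e he
              have := (t1.append t2).edges_subset_edgeSet he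
              rw [hGdedge] at this
              exact this.1
            obtain ⟨c, hcX, hcsup⟩ :=
              hXsep (hP1A i) (hP2B j) ((t1.append t2).transfer G hedges)
            rw [Walk.support_transfer, Walk.mem_support_append_iff] at hcsup
            rcases hcsup with hc | hc
            · -- c on t1 : then c = w1 i, but w1 i is beyond u on Q1 i
              have hc' : c ∈ (Q1 i).support := (Q1 i).support_takeUntil_subset hu1 hc
              have hcw : c = w1 i := hQ1X i c hc' hcX
              -- w1 i occurs in the dropUntil-part's tail, so not in t1
              have hnd := (hQ1p i).support_nodup
              rw [← (Q1 i).take_spec hu1, Walk.support_append] at hnd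
              have hwdrop : c ∈ ((Q1 i).dropUntil u hu1).support.tail := by
                have hcend : c ∈ ((Q1 i).dropUntil u hu1).support := by
                  rw [hcw]; exact Walk.end_mem_support _
                rw [((Q1 i).dropUntil u hu1).support_eq_cons, List.mem_cons] at hcend
                rcases hcend with h1 | h1
                · exact absurd (h1 ▸ hcX) huX
                · exact h1
              exact (List.disjoint_of_nodup_append hnd) hc hwdrop
            · -- c on t2 : then c = z2 j, but z2 j comes before u on Q2 j
              have hc' : c ∈ (Q2 j).support := (Q2 j).support_dropUntil_subset hu2 hc
              have hcz : c = z2 j := hQ2X j c hc' hcX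
              have hnd := (hQ2p j).support_nodup
              rw [← (Q2 j).take_spec hu2, Walk.support_append] at hnd
              have hctake : c ∈ ((Q2 j).takeUntil u hu2).support := by
                rw [hcz]; exact Walk.start_mem_support _
              have hctail : c ∈ ((Q2 j).dropUntil u hu2).support.tail := by
                have hc2 : c ∈ ((Q2 j).dropUntil u hu2).support := hc
                rw [(((Q2 j)).dropUntil u hu2).support_eq_cons, List.mem_cons] at hc2
                rcases hc2 with h1 | h1
                · exact absurd (h1 ▸ hcX) huX
                · exact h1
              exact (List.disjoint_of_nodup_append hnd) hctake hctail
        -- assemble the k disjoint A-B paths in G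
        have hfinal : ∀ i, ∃ r : G.Walk (a1 i) (b2 (σ i)), r.IsPath ∧
            (∀ z ∈ r.support, z ∈ (Q1 i).support ∨ z ∈ (Q2 (σ i)).support) := by
          intro i
          set q2 := (Q2 (σ i)).copy (hσ i) rfl with hq2
          have hq2sup : q2.support = (Q2 (σ i)).support := Walk.support_copy _ _ _
          have hedges : ∀ e ∈ ((Q1 i).append q2).edges, e ∈ G.edgeSet := by
            intro e he
            have := ((Q1 i).append q2).edges_subset_edgeSet he
            rw [hGdedge] at this
            exact this.1
          refine ⟨((Q1 i).append q2).transfer G hedges, ?_, ?_⟩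
          · rw [Walk.isPath_def, Walk.support_transfer, Walk.support_append]
            refine List.Nodup.append (hQ1p i).support_nodup ?_ ?_
            · have := (hQ2p (σ i)).support_nodup
              rw [(Q2 (σ i)).support_eq_cons] at this
              rw [hq2, Walk.support_copy]
              exact this.of_cons
            · intro z hz1 hz2
              have hz2' : z ∈ (Q2 (σ i)).support := by
                rw [(Q2 (σ i)).support_eq_cons]
                right
                rw [hq2, Walk.support_copy] at hz2
                exact hz2
              obtain ⟨hzw, hzz⟩ := hkey i (σ i) z hz1 hz2'
              have := (hQ2p (σ i)).support_nodup
              rw [(Q2 (σ i)).support_eq_cons] at this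
              rw [hq2, Walk.support_copy] at hz2
              exact List.Nodup.notMem this (hzz ▸ hz2)
          · intro z hz
            rw [Walk.support_transfer, Walk.mem_support_append_iff] at hz
            rcases hz with hz | hz
            · exact Or.inl hz
            · right
              rw [hq2, Walk.support_copy] at hz
              exact hz
        choose R hRp hRsub using hfinal
        refine ⟨a1, fun i => b2 (σ i), R, hP1A, fun i => hP2B (σ i), hRp, ?_⟩
        intro i j hij w hwi hwj
        rcases hRsub i w hwi with h1 | h1 <;> rcases hRsub j w hwj with h2 | h2
        · exact hP1d i j hij w (hQ1sub i w h1) (hQ1sub j w h2)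
        · -- w ∈ Q1 i and w ∈ Q2 (σ j) : w = w1 i = z2 (σ j) = w1 j ⇒ i = j
          obtain ⟨hw1, hw2⟩ := hkey i (σ j) w h1 h2
          exact hij (hw1inj (by rw [← hw1, hw2, hσ j]))
        · obtain ⟨hw1, hw2⟩ := hkey j (σ i) w h2 h1
          exact hij (hw1inj (by rw [← hw1, hw2, hσ i]))
        · exact hP2d (σ i) (σ j) (fun h => hij (hσinj h)) w (hQ2sub (σ i) w h1)
            (hQ2sub (σ j) w h2)

/-- Walks of a graph with all edges at `sv` and `no` deleted avoid `sv` and `no`,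
provided their endpoints do. -/
lemma avoid_deleted {G : SimpleGraph W} {sv no : W}
    {a b : W} (p : (G.deleteEdges {e : Sym2 W | sv ∈ e ∨ no ∈ e}).Walk a b)
    (ha1 : a ≠ sv) (ha2 : a ≠ no) (hb1 : b ≠ sv) (hb2 : b ≠ no) :
    ∀ z ∈ p.support, z ≠ sv ∧ z ≠ no := by
  induction p with
  | nil =>
    intro z hz
    rw [Walk.support_nil, List.mem_singleton] at hz
    exact hz ▸ ⟨ha1, ha2⟩
  | @cons u c b h p ih =>
    intro z hz
    have hc : c ≠ sv ∧ c ≠ no := by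
      have hD : s(u, c) ∉ {e : Sym2 W | sv ∈ e ∨ no ∈ e} := by
        have := h
        rw [SimpleGraph.deleteEdges_adj] at this
        exact this.2
      constructor
      · intro hcsv
        exact hD (Or.inl (hcsv ▸ Sym2.mem_mk_right u c))
      · intro hcno
        exact hD (Or.inr (hcno ▸ Sym2.mem_mk_right u c))
    rw [Walk.support_cons, List.mem_cons] at hz
    rcases hz with rfl | hz
    · exact ⟨ha1, ha2⟩
    · exact ih hc.1 hc.2 hb1 hb2 z hz

end KTrAux


open KTrAux in
/-- Let `T` be an `m`-dominating set of `G` with `m ≥ k ≥ 1`, `S ⊆ V \ T`, and let `Hr` be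
the subgraph of `G_r` induced by `T ∪ S ∪ {r}`, where `G_r` is obtained from `G` by joining
a new node `r` exactly to a set `R ⊆ T` with `|R| = k` (the new node is modeled by `none`
in `Option ↥(T ∪ S)`). If `Hr` is `k`-`(T,r)`-connected then `Hr` is `k`-in-connected to `r`. -/
theorem kTr_connected_implies_kInConnected
    {V : Type*} [Fintype V] (G : SimpleGraph V) (k m : ℕ)
    (hk : 1 ≤ k) (hkm : k ≤ m)
    (T S : Set V) (hS : S ⊆ Tᶜ)
    (hdom : ∀ v : V, v ∉ T → m ≤ (T ∩ G.neighborSet v).ncard)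
    (R : Set V) (hRT : R ⊆ T) (hRcard : R.ncard = k)
    (Hr : SimpleGraph (Option ↥(T ∪ S)))
    (hHrG : ∀ u v : ↥(T ∪ S), Hr.Adj (some u) (some v) ↔ G.Adj (u : V) (v : V))
    (hHrR : ∀ v : ↥(T ∪ S), Hr.Adj none (some v) ↔ (v : V) ∈ R)
    (hTr : ∀ t : ↥(T ∪ S), (t : V) ∈ T → HasIDPaths Hr (some t) none k) :
    ∀ v : ↥(T ∪ S), HasIDPaths Hr (some v) none k := by
  classical
  intro v
  by_cases hvT : (v : V) ∈ T
  · exact hTr v hvT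
  · have hvS : (v : V) ∈ S := ((Set.mem_union _ _ _).mp v.2).resolve_left hvT
    have hvR : (v : V) ∉ R := fun h => (hS hvS) (hRT h)
    haveI : Finite ↥(T ∪ S) := Set.Finite.to_subtype (Set.toFinite _)
    set sv : Option ↥(T ∪ S) := some v with hsv
    set A : Set (Option ↥(T ∪ S)) := {w | Hr.Adj sv w} with hA
    set B : Set (Option ↥(T ∪ S)) := {w | Hr.Adj none w} with hB
    have hAnone : (none : Option ↥(T ∪ S)) ∉ A := by
      intro h
      exact hvR ((hHrR v).mp (Hr.adj_symm h))
    have hBnone : (none : Option ↥(T ∪ S)) ∉ B := fun h => Hr.loopless.irrefl _ h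
    have hAsv : sv ∉ A := fun h => Hr.loopless.irrefl _ h
    have hBsv : sv ∉ B := fun h => hvR ((hHrR v).mp h)
    have hAprop : ∀ w ∈ A, w ≠ sv ∧ w ≠ none := by
      intro w hw
      constructor
      · rintro rfl; exact hAsv hw
      · rintro rfl; exact hAnone hw
    have hBprop : ∀ w ∈ B, w ≠ sv ∧ w ≠ none := by
      intro w hw
      constructor
      · rintro rfl; exact hBsv hw
      · rintro rfl; exact hBnone hw
    set D : Set (Sym2 (Option ↥(T ∪ S))) :=
      {e | sv ∈ e ∨ (none : Option ↥(T ∪ S)) ∈ e} with hD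
    set Gd := Hr.deleteEdges D with hGd
    have hGdedge : Gd.edgeSet = Hr.edgeSet \ D := SimpleGraph.edgeSet_deleteEdges _
    -- the separation hypothesis for Menger's theorem
    have hsepmain : ∀ C, Sep Gd A B C → k ≤ C.ncard := by
      intro C hC
      set C' := C \ {sv, (none : Option ↥(T ∪ S))} with hC'def
      have hC' : Sep Gd A B C' := by
        intro a b ha hb p
        obtain ⟨c, hcC, hcp⟩ := hC ha hb p
        have hcs := avoid_deleted p (hAprop a ha).1 (hAprop a ha).2
          (hBprop b hb).1 (hBprop b hb).2 c hcp
        refine ⟨c, ⟨hcC, ?_⟩, hcp⟩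
        rintro (rfl | rfl)
        · exact hcs.1 rfl
        · exact hcs.2 rfl
      have hmono : C'.ncard ≤ C.ncard := Set.ncard_le_ncard Set.diff_subset (Set.toFinite _)
      suffices h : k ≤ C'.ncard by omega
      by_contra hlt
      push_neg at hlt
      have hnoneC' : (none : Option ↥(T ∪ S)) ∉ C' := by
        rintro ⟨_, hmem⟩
        exact hmem (Or.inr rfl)
      -- a neighbour of v in T avoiding C'
      set f : V → Option ↥(T ∪ S) :=
        fun t => if h : t ∈ T ∪ S then (some ⟨t, h⟩ : Option ↥(T ∪ S)) else none with hf
      set N := f '' (T ∩ G.neighborSet (v : V)) with hN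
      have hNcard : m ≤ N.ncard := by
        rw [hN, Set.ncard_image_of_injOn]
        · exact hdom (v : V) hvT
        · intro t1 ht1 t2 ht2 heq
          simp only [hf] at heq
          rw [dif_pos (show t1 ∈ T ∪ S from Or.inl ht1.1), dif_pos (show t2 ∈ T ∪ S from Or.inl ht2.1)] at heq
          exact congrArg Subtype.val (Option.some_injective _ heq)
      have hNA : N ⊆ A := by
        rintro _ ⟨t, ⟨htT, htnb⟩, rfl⟩
        simp only [hf]
        rw [dif_pos (show t ∈ T ∪ S from Or.inl htT)]
        exact (hHrG v ⟨t, Or.inl htT⟩).mpr htnb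
      obtain ⟨w0, hw0N, hw0C⟩ : ∃ w ∈ N, w ∉ C' := by
        by_contra hcon
        push_neg at hcon
        have := Set.ncard_le_ncard hcon (Set.toFinite _)
        omega
      have hw0A : w0 ∈ A := hNA hw0N
      obtain ⟨t, htmem, hteq⟩ := hw0N
      set tt : ↥(T ∪ S) := ⟨t, Or.inl htmem.1⟩ with htt
      have httval : w0 = some tt := by
        rw [← hteq]
        simp only [hf]
        rw [dif_pos (show t ∈ T ∪ S from Or.inl htmem.1)]
      -- the k internally disjoint paths from tt to the root
      obtain ⟨P, hPinj, hPdisj⟩ := hTr tt htmem.1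
      -- one of them avoids C'
      obtain ⟨i₀, hi₀⟩ : ∃ i, ∀ c ∈ C', c ∉ (P i).val.support := by
        by_contra hcon
        push_neg at hcon
        choose g hgC hgsup using hcon
        have hginj : Function.Injective g := by
          intro i j hij
          by_contra hne'
          rcases hPdisj i j hne' (g i) (hgsup i) (hij ▸ hgsup j) with h | h
          · exact hw0C (by rw [httval, ← h]; exact hgC i)
          · exact hnoneC' (h ▸ hgC i)
        have hsub : Set.range g ⊆ C' := by
          rintro _ ⟨i, rfl⟩
          exact hgC i
        have hcard : (Set.range g).ncard = k := by
          rw [← Set.image_univ, Set.ncard_image_of_injective _ hginj, Set.ncard_univ]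
          simp
        have := Set.ncard_le_ncard hsub (Set.toFinite _)
        omega
      set p := (P i₀).val with hpdef
      have hppath : p.IsPath := (P i₀).2
      -- peeling off the final edge into the root gives a Gd-walk from A to B avoiding C'
      have STRIP : ∀ (u₀ : Option ↥(T ∪ S)) (q₀ : Hr.Walk u₀ none), u₀ ∈ A →
          q₀.IsPath → sv ∉ q₀.support → (∀ z ∈ q₀.support, z ∈ p.support) → False := by
        intro u₀ q₀ hu₀A hq₀path hsvq hsubp
        have hu₀ : u₀ ≠ none := (hAprop u₀ hu₀A).2
        have hq₀rev : ¬ q₀.reverse.Nil := Walk.not_nil_of_ne (fun h => hu₀ h.symm)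
        obtain ⟨u₁, h₁, q₁, hq₁⟩ := Walk.not_nil_iff.mp hq₀rev
        have hq₁sub : ∀ z ∈ q₁.support, z ∈ q₀.support := by
          intro z hz
          have : z ∈ q₀.reverse.support := by
            rw [hq₁, Walk.support_cons]
            exact List.mem_cons_of_mem _ hz
          rwa [Walk.support_reverse, List.mem_reverse] at this
        have hnone_q₁ : (none : Option ↥(T ∪ S)) ∉ q₁.support := by
          have hnd : q₀.reverse.support.Nodup := hq₀path.reverse.support_nodup
          rw [hq₁, Walk.support_cons] at hnd
          exact (List.nodup_cons.mp hnd).1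
        have hedges : ∀ e ∈ q₁.reverse.edges, e ∈ Gd.edgeSet := by
          intro e he
          rw [hGdedge]
          refine ⟨q₁.reverse.edges_subset_edgeSet he, ?_⟩
          intro heD
          induction e with
          | _ α β =>
            have hα := q₁.reverse.fst_mem_support_of_mem_edges he
            have hβ := q₁.reverse.snd_mem_support_of_mem_edges he
            rw [Walk.support_reverse, List.mem_reverse] at hα hβ
            rcases heD with hmem | hmem <;> rw [Sym2.mem_iff] at hmem
            · rcases hmem with rfl | rfl
              · exact hsvq (hq₁sub _ hα)
              · exact hsvq (hq₁sub _ hβ)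
            · rcases hmem with rfl | rfl
              · exact hnone_q₁ hα
              · exact hnone_q₁ hβ
        have hu₁B : u₁ ∈ B := h₁
        obtain ⟨c, hcC, hcsup⟩ := hC' hu₀A hu₁B (q₁.reverse.transfer Gd hedges)
        rw [Walk.support_transfer, Walk.support_reverse, List.mem_reverse] at hcsup
        exact hi₀ c hcC (hsubp c (hq₁sub c hcsup))
      by_cases hsvp : sv ∈ p.support
      · have hq'nn : ¬ (p.dropUntil sv hsvp).Nil :=
          Walk.not_nil_of_ne (show sv ≠ none by simp [hsv])
        obtain ⟨u₀, h₀, q₀, hq₀⟩ := Walk.not_nil_iff.mp hq'nn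
        have hu₀A : u₀ ∈ A := h₀
        have hq'path : (p.dropUntil sv hsvp).IsPath := hppath.dropUntil hsvp
        rw [hq₀, Walk.cons_isPath_iff] at hq'path
        have hsub : ∀ z ∈ q₀.support, z ∈ p.support := by
          intro z hz
          refine p.support_dropUntil_subset hsvp ?_
          rw [hq₀, Walk.support_cons]
          exact List.mem_cons_of_mem _ hz
        exact STRIP u₀ q₀ hu₀A hq'path.1 hq'path.2 hsub
      · have httA : some tt ∈ A := by rw [← httval]; exact hw0A
        exact STRIP (some tt) p httA hppath hsvp (fun z hz => hz)
    -- apply Menger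
    obtain ⟨a, b, P, haA, hbB, hPp, hPd⟩ :=
      menger Gd.edgeSet.ncard Gd A B k le_rfl hsepmain
    -- transfer to Hr and add the two end edges
    have hPavoid : ∀ i, ∀ z ∈ (P i).support, z ≠ sv ∧ z ≠ none := by
      intro i
      exact avoid_deleted (P i) (hAprop _ (haA i)).1 (hAprop _ (haA i)).2
        (hBprop _ (hbB i)).1 (hBprop _ (hbB i)).2
    have htrans : ∀ i, ∃ q : Hr.Walk (a i) (b i), q.support = (P i).support ∧ q.IsPath := by
      intro i
      have hedges : ∀ e ∈ (P i).edges, e ∈ Hr.edgeSet := by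
        intro e he
        have := (P i).edges_subset_edgeSet he
        rw [hGdedge] at this
        exact this.1
      refine ⟨(P i).transfer Hr hedges, Walk.support_transfer _ _, ?_⟩
      rw [Walk.isPath_def, Walk.support_transfer, ← Walk.isPath_def]
      exact hPp i
    choose Q hQsup hQp using htrans
    have hQfull : ∀ i, ∃ r : Hr.Walk sv none, r.IsPath ∧
        r.support = sv :: ((Q i).support ++ [(none : Option ↥(T ∪ S))]) := by
      intro i
      have hstart : Hr.Adj sv (a i) := haA i
      have hend : Hr.Adj (b i) none := (hbB i).symm
      refine ⟨Walk.cons hstart ((Q i).concat hend), ?_, ?_⟩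
      · rw [Walk.isPath_def, Walk.support_cons, Walk.support_concat]
        rw [List.nodup_cons]
        constructor
        · rw [List.mem_append, List.mem_singleton]
          rintro (h | h)
          · exact ((hPavoid i) sv (hQsup i ▸ h)).1 rfl
          · exact Option.some_ne_none v h
        · refine List.Nodup.append ?_ (List.nodup_singleton _) ?_
          · exact (hQp i).support_nodup
          · intro z hz1 hz2
            rw [List.mem_singleton] at hz2
            subst hz2
            exact ((hPavoid i) _ (hQsup i ▸ hz1)).2 rfl
      · rw [Walk.support_cons, Walk.support_concat]
    choose Rw hRwp hRwsup using hQfull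
    refine ⟨fun i => ⟨Rw i, hRwp i⟩, ?_, ?_⟩
    · intro i j hij
      by_contra hne'
      have hsupeq : (Rw i).support = (Rw j).support := by
        rw [congrArg (fun q : Hr.Path sv none => q.val.support) hij]
      have hai : a i ∈ (Rw i).support := by
        rw [hRwsup i, List.mem_cons, List.mem_append]
        refine Or.inr (Or.inl ?_)
        rw [hQsup i]
        exact (P i).start_mem_support
      rw [hsupeq, hRwsup j, List.mem_cons, List.mem_append, List.mem_singleton] at hai
      rcases hai with hai | hai | hai
      · exact ((hAprop _ (haA i)).1) hai
      · exact hPd i j hne' (a i) (P i).start_mem_support (hQsup j ▸ hai)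
      · exact ((hAprop _ (haA i)).2) hai
    · intro i j hij w hwi hwj
      simp only at hwi hwj
      rw [hRwsup i, List.mem_cons, List.mem_append, List.mem_singleton] at hwi
      rw [hRwsup j, List.mem_cons, List.mem_append, List.mem_singleton] at hwj
      rcases hwi with rfl | hwi | rfl
      · exact Or.inl hsv
      · rcases hwj with rfl | hwj | rfl
        · exact Or.inl hsv
        · exact absurd ((hQsup j) ▸ hwj) (hPd i j hij w ((hQsup i) ▸ hwi))
        · exact Or.inr rfl
      · exact Or.inr rfl
end
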